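/- arXiv:math/0604433 — 5 statements merged into one kernel-verified Lean document; each statement's English description precedes it below -/
import Mathlib

section
/- Let G be a countable discrete group equipped with the word metric d coming from a finite symmetric generating set, let μ be a probability measure on G, let R ⊆ G, and for k > 0 let R_k = { r ∈ R : there exists r' ∈ R with r' ≠ r and d(r, r') ≤ k } be the set of k-dense elements of R. Then for all natural numbers m < n, μ^(n)(R) ≤ μ^(n)(R_k) + sup{ μ^(m)({g}) : g ∈ G } + μ^(m)(G ∖ B_{k/2}), where B_{k/2} = { g ∈ G : ∥g∥ ≤ k/2 } is the ball of radius k/2 about the identity in the word metric. -/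
open ENNReal MeasureTheory

/-- The word length of `g` with respect to a generating set `S`: the least `n` such that
`g` is a product of `n` elements of `S`. -/
noncomputable def wordLength {G : Type*} [Group G] (S : Set G) (g : G) : ℕ :=
  sInf {n : ℕ | ∃ l : List G, (∀ x ∈ l, x ∈ S) ∧ l.length = n ∧ l.prod = g}

/-- The word metric `d(x,y) = ∥x⁻¹ y∥` associated to the generating set `S`. -/
noncomputable def wordDist {G : Type*} [Group G] (S : Set G) (x y : G) : ℕ :=
  wordLength S (x⁻¹ * y)

/-- The `n`-fold convolution `μ^(n)` of a probability distribution `μ` on a group `G`: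
`μ^(0)` is the point mass at the identity, and
`μ^(n)(A) = Σ_g μ^(n-1)({g}) μ(g⁻¹A)`, the distribution at time `n` of the random walk
with step distribution `μ` started at the identity. -/
noncomputable def convPow {G : Type*} [Group G] (μ : PMF G) : ℕ → PMF G
  | 0 => PMF.pure 1
  | n + 1 => (convPow μ n).bind fun g => μ.map fun s => g * s

section Aux

variable {G : Type*} [Group G]

lemma wordLength_nonempty {S : Set G} (hSsymm : ∀ s ∈ S, s⁻¹ ∈ S)
    (hSgen : Subgroup.closure S = ⊤) (g : G) :
    {n : ℕ | ∃ l : List G, (∀ x ∈ l, x ∈ S) ∧ l.length = n ∧ l.prod = g}.Nonempty := by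
  have hg : g ∈ (Subgroup.closure S).toSubmonoid := by
    rw [hSgen]; trivial
  rw [Subgroup.closure_toSubmonoid] at hg
  obtain ⟨l, hl, hprod⟩ := Submonoid.exists_list_of_mem_closure hg
  refine ⟨l.length, l, fun x hx => ?_, rfl, hprod⟩
  rcases hl x hx with h | h
  · exact h
  · have := hSsymm _ h
    simpa using this

lemma wordLength_spec {S : Set G} (hSsymm : ∀ s ∈ S, s⁻¹ ∈ S)
    (hSgen : Subgroup.closure S = ⊤) (g : G) :
    ∃ l : List G, (∀ x ∈ l, x ∈ S) ∧ l.length = wordLength S g ∧ l.prod = g :=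
  Nat.sInf_mem (wordLength_nonempty hSsymm hSgen g)

lemma wordLength_mul_le {S : Set G} (hSsymm : ∀ s ∈ S, s⁻¹ ∈ S)
    (hSgen : Subgroup.closure S = ⊤) (x y : G) :
    wordLength S (x * y) ≤ wordLength S x + wordLength S y := by
  obtain ⟨l₁, hl₁, hlen₁, hprod₁⟩ := wordLength_spec hSsymm hSgen x
  obtain ⟨l₂, hl₂, hlen₂, hprod₂⟩ := wordLength_spec hSsymm hSgen y
  apply Nat.sInf_le
  exact ⟨l₁ ++ l₂, fun a ha => by
    rcases List.mem_append.mp ha with h | h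
    exacts [hl₁ a h, hl₂ a h],
    by simp [hlen₁, hlen₂], by simp [hprod₁, hprod₂]⟩

lemma wordLength_inv_le {S : Set G} (hSsymm : ∀ s ∈ S, s⁻¹ ∈ S)
    (hSgen : Subgroup.closure S = ⊤) (x : G) :
    wordLength S x⁻¹ ≤ wordLength S x := by
  obtain ⟨l, hl, hlen, hprod⟩ := wordLength_spec hSsymm hSgen x
  apply Nat.sInf_le
  refine ⟨(l.map fun a => a⁻¹).reverse, fun a ha => ?_, by simp [hlen], ?_⟩
  · simp only [List.mem_reverse, List.mem_map] at ha
    obtain ⟨b, hb, rfl⟩ := ha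
    exact hSsymm b (hl b hb)
  · rw [← List.prod_inv_reverse, hprod]

lemma convPow_add {μ : PMF G} (a b : ℕ) :
    convPow μ (a + b) = (convPow μ a).bind fun g => (convPow μ b).map fun s => g * s := by
  induction b with
  | zero =>
    simp only [Nat.add_zero, convPow, PMF.pure_map, mul_one]
    exact (PMF.bind_pure _).symm
  | succ b ih =>
    show (convPow μ (a + b)).bind _ = _
    rw [ih, PMF.bind_bind]
    show _ = (convPow μ a).bind fun g => ((convPow μ b).bind fun h => μ.map fun s => h * s).map _
    simp only [PMF.map_bind]
    congr 1
    funext g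
    rw [PMF.bind_map]
    congr 1
    funext h
    simp only [Function.comp, PMF.map_comp]
    congr 1
    funext s
    simp [mul_assoc]

lemma toOuterMeasure_le_iSup_of_subsingleton {p : PMF G} {s : Set G}
    (hs : s.Subsingleton) : p.toOuterMeasure s ≤ ⨆ g : G, p g := by
  rcases hs.eq_empty_or_singleton with rfl | ⟨a, rfl⟩
  · simp
  · rw [PMF.toOuterMeasure_apply_singleton]
    exact le_iSup (fun g => p g) a

end Aux

/-- Let `R ⊆ G` and let `R_k` be the set of `k`-dense elements of `R`, i.e. those `r ∈ R`
within word-metric distance `k` of some other element of `R`.  Then for all `m < n`,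
`μ^(n)(R) ≤ μ^(n)(R_k) + sup { μ^(m)({g}) : g ∈ G } + μ^(m)(G \ B_{k/2})`,
where `B_{k/2}` is the ball of radius `k/2` about the identity in the word metric. -/
theorem statement1 {G : Type*} [Group G] [Countable G]
    (S : Set G) (hSfin : S.Finite) (hSsymm : ∀ s ∈ S, s⁻¹ ∈ S)
    (hSgen : Subgroup.closure S = ⊤)
    (μ : PMF G) (k : ℝ) (hk : 0 < k)
    (R : Set G)
    (m n : ℕ) (hmn : m < n) :
    (convPow μ n).toOuterMeasure R ≤
      (convPow μ n).toOuterMeasure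
          {r ∈ R | ∃ r' ∈ R, r' ≠ r ∧ (wordDist S r r' : ℝ) ≤ k} +
        (⨆ g : G, convPow μ m g) +
        (convPow μ m).toOuterMeasure {g : G | (wordLength S g : ℝ) ≤ k / 2}ᶜ := by
  set Rk : Set G := {r ∈ R | ∃ r' ∈ R, r' ≠ r ∧ (wordDist S r r' : ℝ) ≤ k} with hRk
  set B : Set G := {g : G | (wordLength S g : ℝ) ≤ k / 2} with hB
  set D : Set G := R \ Rk with hD
  set C : ℝ≥0∞ := ⨆ g : G, convPow μ m g with hC
  set E : ℝ≥0∞ := (convPow μ m).toOuterMeasure Bᶜ with hE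
  -- Step 1: subadditivity
  have h1 : (convPow μ n).toOuterMeasure R ≤
      (convPow μ n).toOuterMeasure Rk + (convPow μ n).toOuterMeasure D := by
    refine le_trans (measure_mono ?_) (measure_union_le Rk D)
    intro r hr
    by_cases h : r ∈ Rk
    · exact Or.inl h
    · exact Or.inr ⟨hr, h⟩
  -- decompose convPow μ n
  have hn : n = (n - m) + m := by omega
  have hdec : convPow μ n = (convPow μ (n - m)).bind
      fun g => (convPow μ m).map fun s => g * s := by
    conv_lhs => rw [hn]
    exact convPow_add _ _
  -- Step 2: bound on D
  have h2 : (convPow μ n).toOuterMeasure D ≤ C + E := by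
    rw [hdec, PMF.toOuterMeasure_bind_apply]
    have hbound : ∀ g : G,
        ((convPow μ m).map fun s => g * s).toOuterMeasure D ≤ C + E := by
      intro g
      rw [PMF.toOuterMeasure_map_apply]
      set A : Set G := (fun s => g * s) ⁻¹' D with hA
      have hsub : A ⊆ (A ∩ B) ∪ Bᶜ := by
        intro a ha
        by_cases hb : a ∈ B
        · exact Or.inl ⟨ha, hb⟩
        · exact Or.inr hb
      refine le_trans (measure_mono hsub) (le_trans (measure_union_le _ _) ?_)
      gcongr
      apply toOuterMeasure_le_iSup_of_subsingleton
      intro a ⟨haD, haB⟩ a' ⟨haD', haB'⟩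
      by_contra hne
      have hmul : g * a ≠ g * a' := by
        intro h; exact hne (mul_left_cancel h)
      -- g * a ∈ D so g * a ∉ Rk; but g * a' witnesses density
      have hdist : (wordDist S (g * a) (g * a') : ℝ) ≤ k := by
        have h1' : wordDist S (g * a) (g * a') = wordLength S (a⁻¹ * a') := by
          unfold wordDist
          congr 1
          group
        have h2' : wordLength S (a⁻¹ * a') ≤ wordLength S a + wordLength S a' := by
          refine le_trans (wordLength_mul_le hSsymm hSgen _ _) ?_
          gcongr
          exact wordLength_inv_le hSsymm hSgen a
        have haB2 : (wordLength S a : ℝ) ≤ k / 2 := haB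
        have haB2' : (wordLength S a' : ℝ) ≤ k / 2 := haB'
        rw [h1']
        calc (wordLength S (a⁻¹ * a') : ℝ) ≤ (wordLength S a : ℝ) + wordLength S a' := by
              exact_mod_cast h2'
          _ ≤ k / 2 + k / 2 := by gcongr
          _ = k := by ring
      exact haD.2 ⟨haD.1, g * a', haD'.1, hmul.symm, hdist⟩
    calc ∑' g, convPow μ (n - m) g * ((convPow μ m).map fun s => g * s).toOuterMeasure D
        ≤ ∑' g, convPow μ (n - m) g * (C + E) := by
          exact ENNReal.tsum_le_tsum fun g => mul_le_mul_right (hbound g) _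
      _ = (∑' g, convPow μ (n - m) g) * (C + E) := ENNReal.tsum_mul_right
      _ = C + E := by rw [PMF.tsum_coe, one_mul]
  calc (convPow μ n).toOuterMeasure R
      ≤ (convPow μ n).toOuterMeasure Rk + (convPow μ n).toOuterMeasure D := h1
    _ ≤ (convPow μ n).toOuterMeasure Rk + (C + E) := by gcongr
    _ = (convPow μ n).toOuterMeasure Rk + C + E := by rw [add_assoc]
end

section
/- Let G be a group with word length ∥·∥ and word metric d coming from a symmetric generating set (possibly infinite), suppose the word metric is δ-hyperbolic (every geodesic triangle is δ-slim), and suppose G has conjugacy bounds with constant K ≥ 1. Let B ≥ 1, let R be a set of elements of G each of which is conjugate in G to an element of word length at most B, and let g ∈ G. Then there exists a constant L ≥ 0, depending only on B, ∥g∥, δ and K, such that every r ∈ R ∩ Rg lies in the L-horoball neighbourhood of the centralizer C(g) = { c ∈ G : cg = gc }; that is, for every r ∈ R with rg ∈ R there exists c ∈ C(g) with d(r, c) ≤ ∥c∥ + L. -/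
/-- A geodesic in the (integer-valued) word metric: a finite sequence
`γ 0, γ 1, …, γ N` with `d(γ i, γ j) = |i - j|` for all `i, j`. -/
def IsWordGeodesic {G : Type*} [Group G] (S : Set G) (N : ℕ) (γ : Fin (N + 1) → G) : Prop :=
  ∀ i j : Fin (N + 1), (wordDist S (γ i) (γ j) : ℤ) = |(i : ℤ) - (j : ℤ)|

/-- The word metric is `δ`-hyperbolic (`δ`-slim triangles): for any triangle of geodesics,
each side lies in the closed `δ`-neighbourhood of the union of the other two.  (Since the
quantification is over all vertices and all geodesics, and reversal of a geodesic is a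
geodesic, it suffices to require this for the side from `x` to `z`.) -/
def WordSlimTriangles {G : Type*} [Group G] (S : Set G) (δ : ℝ) : Prop :=
  ∀ (x y z : G) (N₁ N₂ N₃ : ℕ)
    (γ₁ : Fin (N₁ + 1) → G) (γ₂ : Fin (N₂ + 1) → G) (γ₃ : Fin (N₃ + 1) → G),
    IsWordGeodesic S N₁ γ₁ → IsWordGeodesic S N₂ γ₂ → IsWordGeodesic S N₃ γ₃ →
    γ₁ 0 = x → γ₁ (Fin.last N₁) = y →
    γ₂ 0 = y → γ₂ (Fin.last N₂) = z →
    γ₃ 0 = x → γ₃ (Fin.last N₃) = z →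
    ∀ i : Fin (N₃ + 1), ∃ p ∈ Set.range γ₁ ∪ Set.range γ₂, (wordDist S (γ₃ i) p : ℝ) ≤ δ

/-- `G` (with word length `∥⬝∥`) has conjugacy bounds with constant `K`: whenever `a` and
`b` are conjugate there is `v` with `a = v b v⁻¹` and `∥v∥ ≤ K (∥a∥ + ∥b∥)`. -/
def HasConjugacyBounds {G : Type*} [Group G] (S : Set G) (K : ℝ) : Prop :=
  ∀ a b : G, IsConj a b →
    ∃ v : G, a = v * b * v⁻¹ ∧
      (wordLength S v : ℝ) ≤ K * ((wordLength S a : ℝ) + (wordLength S b : ℝ))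

namespace S4
variable {G : Type*} [Group G] {S : Set G}

lemma exists_list (hSsymm : ∀ s ∈ S, s⁻¹ ∈ S) (hSgen : Subgroup.closure S = ⊤) (x : G) :
    ∃ l : List G, (∀ y ∈ l, y ∈ S) ∧ l.prod = x := by
  have hx : x ∈ Subgroup.closure S := hSgen ▸ Subgroup.mem_top x
  induction hx using Subgroup.closure_induction with
  | mem y hy => exact ⟨[y], by simpa using hy, by simp⟩
  | one => exact ⟨[], by simp, by simp⟩
  | mul a b _ _ ha hb =>
    obtain ⟨l₁, h₁, h₁'⟩ := ha
    obtain ⟨l₂, h₂, h₂'⟩ := hb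
    refine ⟨l₁ ++ l₂, ?_, by simp [h₁', h₂']⟩
    intro y hy
    rcases List.mem_append.mp hy with h | h
    exacts [h₁ y h, h₂ y h]
  | inv a _ ha =>
    obtain ⟨l, h, h'⟩ := ha
    refine ⟨(l.map fun z => z⁻¹).reverse, ?_, ?_⟩
    · intro y hy
      simp only [List.mem_reverse, List.mem_map] at hy
      obtain ⟨z, hz, rfl⟩ := hy
      exact hSsymm z (h z hz)
    · rw [← List.prod_inv_reverse, h']

lemma wl_le {x : G} {l : List G} (h1 : ∀ y ∈ l, y ∈ S) (h2 : l.prod = x) :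
    wordLength S x ≤ l.length :=
  Nat.sInf_le ⟨l, h1, rfl, h2⟩

lemma wl_spec (hSsymm : ∀ s ∈ S, s⁻¹ ∈ S) (hSgen : Subgroup.closure S = ⊤) (x : G) :
    ∃ l : List G, (∀ y ∈ l, y ∈ S) ∧ l.length = wordLength S x ∧ l.prod = x := by
  obtain ⟨l, h1, h2⟩ := exists_list hSsymm hSgen x
  have hne : {n : ℕ | ∃ l : List G, (∀ y ∈ l, y ∈ S) ∧ l.length = n ∧ l.prod = x}.Nonempty :=
    ⟨l.length, l, h1, rfl, h2⟩
  exact Nat.sInf_mem hne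

lemma wl_one : wordLength S (1 : G) = 0 :=
  Nat.le_zero.mp (wl_le (l := []) (by simp) (by simp))

lemma wl_mul (hSsymm : ∀ s ∈ S, s⁻¹ ∈ S) (hSgen : Subgroup.closure S = ⊤) (x y : G) :
    wordLength S (x * y) ≤ wordLength S x + wordLength S y := by
  obtain ⟨l₁, h₁, e₁, p₁⟩ := wl_spec hSsymm hSgen x
  obtain ⟨l₂, h₂, e₂, p₂⟩ := wl_spec hSsymm hSgen y
  have hmem : ∀ z ∈ l₁ ++ l₂, z ∈ S := by
    intro z hz
    rcases List.mem_append.mp hz with h | h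
    exacts [h₁ z h, h₂ z h]
  have := wl_le (S := S) hmem (by simp [p₁, p₂] : (l₁ ++ l₂).prod = x * y)
  simpa [e₁, e₂] using this

lemma wl_inv_le (hSsymm : ∀ s ∈ S, s⁻¹ ∈ S) (hSgen : Subgroup.closure S = ⊤) (x : G) :
    wordLength S x⁻¹ ≤ wordLength S x := by
  obtain ⟨l, h, e, p⟩ := wl_spec hSsymm hSgen x
  have hmem : ∀ y ∈ (l.map fun z => z⁻¹).reverse, y ∈ S := by
    intro y hy
    simp only [List.mem_reverse, List.mem_map] at hy
    obtain ⟨z, hz, rfl⟩ := hy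
    exact hSsymm z (h z hz)
  have := wl_le (S := S) hmem (by rw [← List.prod_inv_reverse, p])
  simpa [e] using this

lemma wl_inv (hSsymm : ∀ s ∈ S, s⁻¹ ∈ S) (hSgen : Subgroup.closure S = ⊤) (x : G) :
    wordLength S x⁻¹ = wordLength S x :=
  le_antisymm (wl_inv_le hSsymm hSgen x) (by
    simpa using wl_inv_le hSsymm hSgen x⁻¹)

lemma wd_tri (hSsymm : ∀ s ∈ S, s⁻¹ ∈ S) (hSgen : Subgroup.closure S = ⊤) (a b c : G) :
    wordDist S a c ≤ wordDist S a b + wordDist S b c := by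
  have h : a⁻¹ * c = (a⁻¹ * b) * (b⁻¹ * c) := by group
  unfold wordDist
  rw [h]
  exact wl_mul hSsymm hSgen _ _

lemma wd_symm (hSsymm : ∀ s ∈ S, s⁻¹ ∈ S) (hSgen : Subgroup.closure S = ⊤) (a b : G) :
    wordDist S a b = wordDist S b a := by
  unfold wordDist
  rw [← wl_inv hSsymm hSgen (a⁻¹ * b)]
  congr 1
  group

lemma wd_left (z a b : G) : wordDist S (z * a) (z * b) = wordDist S a b := by
  unfold wordDist
  congr 1
  group

lemma wd_one (a : G) : wordDist S 1 a = wordLength S a := by simp [wordDist]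

lemma geodesic_exists (hSsymm : ∀ s ∈ S, s⁻¹ ∈ S) (hSgen : Subgroup.closure S = ⊤)
    (x y : G) :
    ∃ γ : Fin (wordDist S x y + 1) → G, IsWordGeodesic S (wordDist S x y) γ ∧
      γ 0 = x ∧ γ (Fin.last _) = y := by
  obtain ⟨l, hl, hlen, hprod⟩ := wl_spec hSsymm hSgen (x⁻¹ * y)
  have hlen' : l.length = wordDist S x y := hlen
  set N := wordDist S x y with hN
  refine ⟨fun i => x * (l.take i).prod, ?_, by simp, ?_⟩
  · -- geodesic property
    have key : ∀ i j : Fin (N + 1), (i : ℕ) ≤ j →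
        wordDist S (x * (l.take i).prod) (x * (l.take j).prod) = j - i := by
      intro i j hij
      have hup : wordDist S (x * (l.take i).prod) (x * (l.take j).prod) ≤ (j : ℕ) - i := by
        rw [wd_left]
        have htake : l.take j = l.take i ++ (l.drop i).take ((j : ℕ) - i) := by
          rw [← List.take_add]
          congr 1
          omega
        have : ((l.take (i : ℕ)).prod)⁻¹ * (l.take (j : ℕ)).prod
            = ((l.drop i).take ((j : ℕ) - i)).prod := by
          rw [htake, List.prod_append]
          group
        unfold wordDist
        rw [this]
        have := wl_le (S := S) (l := (l.drop (i : ℕ)).take ((j : ℕ) - i))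
          (by intro z hz
              exact hl z (List.mem_of_mem_drop (List.mem_of_mem_take hz))) rfl
        refine this.trans ?_
        simp [List.length_take]
      have hxi : wordDist S x (x * (l.take i).prod) ≤ (i : ℕ) := by
        have h1 : wordDist S x (x * (l.take (i : ℕ)).prod)
            = wordDist S 1 (l.take (i : ℕ)).prod := by
          simpa using wd_left (S := S) x 1 ((l.take (i : ℕ)).prod)
        rw [h1, wd_one]
        have := wl_le (S := S) (l := l.take (i : ℕ))
          (by intro z hz; exact hl z (List.mem_of_mem_take hz)) rfl
        refine this.trans ?_
        simp [List.length_take]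
      have hjy : wordDist S (x * (l.take j).prod) y ≤ N - (j : ℕ) := by
        unfold wordDist
        have : (x * (l.take (j : ℕ)).prod)⁻¹ * y = (l.drop (j : ℕ)).prod := by
          have h2 : (l.take (j : ℕ)).prod * (l.drop (j : ℕ)).prod = x⁻¹ * y := by
            rw [← List.prod_append, List.take_append_drop, hprod]
          calc (x * (l.take (j : ℕ)).prod)⁻¹ * y
              = ((l.take (j : ℕ)).prod)⁻¹ * (x⁻¹ * y) := by group
            _ = _ := by rw [← h2]; group
        rw [this]
        have := wl_le (S := S) (l := l.drop (j : ℕ))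
          (by intro z hz; exact hl z (List.mem_of_mem_drop hz)) rfl
        refine this.trans ?_
        simp [List.length_drop, hlen']
      have hN' : N = wordDist S x y := rfl
      have hlow : N ≤ (i : ℕ) + wordDist S (x * (l.take i).prod) (x * (l.take j).prod)
          + (N - (j : ℕ)) := by
        calc N = wordDist S x y := hN'
          _ ≤ wordDist S x (x * (l.take i).prod) + wordDist S (x * (l.take i).prod) y :=
            wd_tri hSsymm hSgen _ _ _
          _ ≤ wordDist S x (x * (l.take i).prod)
              + (wordDist S (x * (l.take i).prod) (x * (l.take j).prod)
                + wordDist S (x * (l.take j).prod) y) := by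
            exact Nat.add_le_add_left (wd_tri hSsymm hSgen _ _ _) _
          _ ≤ _ := by
            have := hxi
            have := hjy
            omega
      have hj : (j : ℕ) ≤ N := Nat.lt_succ_iff.mp j.isLt
      omega
    intro i j
    rcases le_total (i : ℕ) (j : ℕ) with h | h
    · have hk := key i j h
      rw [hk, abs_sub_comm, abs_of_nonneg (sub_nonneg.mpr (by exact_mod_cast h))]
      push_cast [Nat.cast_sub h]
      ring
    · have hk := key j i h
      rw [wd_symm hSsymm hSgen, hk, abs_of_nonneg (sub_nonneg.mpr (by exact_mod_cast h))]
      push_cast [Nat.cast_sub h]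
      ring
  · have : l.take (N : ℕ) = l := by
      rw [← hlen']
      exact List.take_length
    simp only [Fin.val_last, this, hprod]
    group

lemma geodesic_translate {N : ℕ} {γ : Fin (N + 1) → G} (z : G)
    (hγ : IsWordGeodesic S N γ) : IsWordGeodesic S N (fun i => z * γ i) := by
  intro i j
  simpa [wd_left] using hγ i j

lemma geodesic_rev {N : ℕ} {γ : Fin (N + 1) → G}
    (hγ : IsWordGeodesic S N γ) : IsWordGeodesic S N (fun i => γ i.rev) := by
  intro i j
  have := hγ i.rev j.rev
  rw [this]
  have hi : ((i.rev : ℕ) : ℤ) = N - (i : ℤ) := by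
    have h1 : (i : ℕ) ≤ N := Nat.lt_succ_iff.mp i.isLt
    have h2 : (i.rev : ℕ) = N - (i : ℕ) := by rw [Fin.val_rev]; omega
    rw [h2]
    push_cast [Nat.cast_sub h1]
    ring
  have hj : ((j.rev : ℕ) : ℤ) = N - (j : ℤ) := by
    have h1 : (j : ℕ) ≤ N := Nat.lt_succ_iff.mp j.isLt
    have h2 : (j.rev : ℕ) = N - (j : ℕ) := by rw [Fin.val_rev]; omega
    rw [h2]
    push_cast [Nat.cast_sub h1]
    ring
  rw [hi, hj, abs_sub_comm]
  congr 1
  ring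


lemma wd_tri_r (hSsymm : ∀ s ∈ S, s⁻¹ ∈ S) (hSgen : Subgroup.closure S = ⊤) (a b c : G) :
    (wordDist S a c : ℝ) ≤ (wordDist S a b : ℝ) + (wordDist S b c : ℝ) := by
  exact_mod_cast wd_tri hSsymm hSgen a b c

lemma wd_left_r (z a b : G) : (wordDist S (z * a) (z * b) : ℝ) = (wordDist S a b : ℝ) := by
  rw [wd_left]

lemma wd_symm_r (hSsymm : ∀ s ∈ S, s⁻¹ ∈ S) (hSgen : Subgroup.closure S = ⊤) (a b : G) :
    (wordDist S a b : ℝ) = (wordDist S b a : ℝ) := by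
  rw [wd_symm hSsymm hSgen]

lemma geo_dist_r {N : ℕ} {γ : Fin (N + 1) → G} (hγ : IsWordGeodesic S N γ)
    (i j : Fin (N + 1)) :
    (wordDist S (γ i) (γ j) : ℝ) = |((i : ℕ) : ℝ) - ((j : ℕ) : ℝ)| := by
  have h := hγ i j
  have h2 : ((wordDist S (γ i) (γ j) : ℤ) : ℝ) = ((|(i : ℤ) - (j : ℤ)| : ℤ) : ℝ) := by
    exact_mod_cast congrArg (fun z : ℤ => (z : ℝ)) h
  push_cast at h2
  exact h2

lemma geo_pos_r {N : ℕ} {γ : Fin (N + 1) → G} (hγ : IsWordGeodesic S N γ)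
    (h0 : γ 0 = 1) (i : Fin (N + 1)) :
    (wordLength S (γ i) : ℝ) = ((i : ℕ) : ℝ) := by
  have h1 : wordLength S (γ i) = wordDist S (γ 0) (γ i) := by rw [h0, wd_one]
  rw [h1, geo_dist_r hγ 0 i]
  simp

lemma geo_dist_last_r {N : ℕ} {γ : Fin (N + 1) → G} (hγ : IsWordGeodesic S N γ)
    {x : G} (hγl : γ (Fin.last N) = x) (i : Fin (N + 1)) :
    (wordDist S (γ i) x : ℝ) = (N : ℝ) - ((i : ℕ) : ℝ) := by
  have h := geo_dist_r hγ i (Fin.last N)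
  rw [hγl] at h
  rw [h]
  simp only [Fin.val_last]
  have h1 : ((i : ℕ) : ℝ) ≤ (N : ℝ) := by exact_mod_cast Nat.lt_succ_iff.mp i.isLt
  rw [abs_of_nonpos (by linarith)]
  ring

lemma slim_apply {δ : ℝ} (hhyp : WordSlimTriangles S δ)
    {N₁ N₂ N₃ : ℕ} {γ₁ : Fin (N₁ + 1) → G} {γ₂ : Fin (N₂ + 1) → G} {γ₃ : Fin (N₃ + 1) → G}
    (h₁ : IsWordGeodesic S N₁ γ₁) (h₂ : IsWordGeodesic S N₂ γ₂) (h₃ : IsWordGeodesic S N₃ γ₃)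
    (hc1 : γ₁ (Fin.last N₁) = γ₂ 0) (hc2 : γ₁ 0 = γ₃ 0)
    (hc3 : γ₂ (Fin.last N₂) = γ₃ (Fin.last N₃)) (i : Fin (N₃ + 1)) :
    ∃ p ∈ Set.range γ₁ ∪ Set.range γ₂, (wordDist S (γ₃ i) p : ℝ) ≤ δ :=
  hhyp (γ₃ 0) (γ₁ (Fin.last N₁)) (γ₃ (Fin.last N₃)) N₁ N₂ N₃ γ₁ γ₂ γ₃ h₁ h₂ h₃
    hc2 rfl hc1.symm hc3 rfl rfl i

lemma key_alpha (hSsymm : ∀ s ∈ S, s⁻¹ ∈ S) (hSgen : Subgroup.closure S = ⊤)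
    {δ : ℝ} (hδ : 0 ≤ δ) (hhyp : WordSlimTriangles S δ)
    {B : ℝ} (x v s : G) (hx : x = v * s * v⁻¹) (hs : (wordLength S s : ℝ) ≤ B)
    {n : ℕ} {γ : Fin (n + 1) → G} (hγ : IsWordGeodesic S n γ)
    (hγ0 : γ 0 = 1) (hγl : γ (Fin.last n) = x)
    {p : ℕ} {α : Fin (p + 1) → G} (hα : IsWordGeodesic S p α)
    (hα0 : α 0 = 1) (hαl : α (Fin.last p) = v)
    (j : Fin (n + 1)) (t : Fin (p + 1))
    (hclose : (wordDist S (γ j) (α t) : ℝ) ≤ 2 * δ) :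
    (wordDist S (γ j) (x * γ j) : ℝ) ≤ |(n : ℝ) - 2 * ((j : ℕ) : ℝ)| + 12 * δ + 3 * B := by
  have tri := wd_tri_r (S := S) hSsymm hSgen
  have symm := wd_symm_r (S := S) hSsymm hSgen
  have hB0 : (0 : ℝ) ≤ B := le_trans (by positivity) hs
  set A := |(n : ℝ) - 2 * ((j : ℕ) : ℝ)| with hA
  have hA1 : (n : ℝ) - 2 * ((j : ℕ) : ℝ) ≤ A := le_abs_self _
  have hA2 : 2 * ((j : ℕ) : ℝ) - (n : ℝ) ≤ A := neg_le_abs _ |>.trans' (by linarith [neg_abs_le ((n : ℝ) - 2 * ((j : ℕ) : ℝ))])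
  have hxv : x * v = v * s := by rw [hx]; group
  -- basic distance facts
  have hmj : (wordLength S (γ j) : ℝ) = ((j : ℕ) : ℝ) := geo_pos_r hγ hγ0 j
  have hat : (wordLength S (α t) : ℝ) = ((t : ℕ) : ℝ) := geo_pos_r hα hα0 t
  have hd1m : (wordDist S 1 (γ j) : ℝ) = ((j : ℕ) : ℝ) := by rw [wd_one]; exact hmj
  have hd1a : (wordDist S 1 (α t) : ℝ) = ((t : ℕ) : ℝ) := by rw [wd_one]; exact hat
  have hdmx : (wordDist S (γ j) x : ℝ) = (n : ℝ) - ((j : ℕ) : ℝ) :=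
    geo_dist_last_r hγ hγl j
  have hdav : (wordDist S (α t) v : ℝ) = (p : ℝ) - ((t : ℕ) : ℝ) :=
    geo_dist_last_r hα hαl t
  have hnx : (wordDist S 1 x : ℝ) = (n : ℝ) := by
    have h := geo_dist_last_r hγ hγl 0
    rw [hγ0] at h
    simpa using h
  have hpv : (wordDist S 1 v : ℝ) = (p : ℝ) := by
    have h := geo_dist_last_r hα hαl 0
    rw [hα0] at h
    simpa using h
  have hdxat : (wordDist S (x * α t) x : ℝ) = ((t : ℕ) : ℝ) := by
    have h1 : (wordDist S (x * α t) (x * 1) : ℝ) = (wordDist S (α t) 1 : ℝ) := wd_left_r _ _ _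
    rw [mul_one] at h1
    rw [h1, symm, wd_one]
    exact hat
  -- |t - j| <= 2 delta
  have htj1 : ((t : ℕ) : ℝ) ≤ ((j : ℕ) : ℝ) + 2 * δ := by
    have := tri 1 (γ j) (α t)
    rw [hd1a, hd1m] at this
    linarith
  have htj2 : ((j : ℕ) : ℝ) ≤ ((t : ℕ) : ℝ) + 2 * δ := by
    have := tri 1 (α t) (γ j)
    rw [hd1a, hd1m] at this
    have h2 : (wordDist S (α t) (γ j) : ℝ) ≤ 2 * δ := by rw [symm]; exact hclose
    linarith
  -- geodesics tau (1 -> v*s) and sigma (v -> v*s)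
  obtain ⟨τ, hτ, hτ0, hτl⟩ := geodesic_exists hSsymm hSgen 1 (v * s)
  obtain ⟨σ, hσ, hσ0, hσl⟩ := geodesic_exists hSsymm hSgen v (v * s)
  have hNσ : ((wordDist S v (v * s) : ℕ) : ℝ) ≤ B := by
    have : wordDist S v (v * s) = wordLength S s := by
      unfold wordDist
      congr 1
      group
    rw [this]
    exact hs
  -- beta geodesic from v*s to x
  set β : Fin (p + 1) → G := fun i => x * α i.rev with hβdef
  have hβ : IsWordGeodesic S p β := geodesic_translate x (geodesic_rev hα)
  have hβ0 : β 0 = v * s := by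
    simp only [hβdef, Fin.rev_zero]
    rw [hαl, hxv]
  have hβl : β (Fin.last p) = x := by
    simp only [hβdef, Fin.rev_last]
    rw [hα0, mul_one]
  -- reversed tau, from v*s to 1
  set τr : Fin (wordDist S 1 (v * s) + 1) → G := fun i => τ i.rev with hτrdef
  have hτr : IsWordGeodesic S _ τr := geodesic_rev hτ
  have hτr0 : τr 0 = v * s := by simp only [hτrdef, Fin.rev_zero]; exact hτl
  have hτrl : τr (Fin.last _) = 1 := by simp only [hτrdef, Fin.rev_last]; exact hτ0
  -- first slim application: beta side vs (tau-reversed, gamma)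
  obtain ⟨P, hPmem, hPd⟩ := slim_apply hhyp hτr hγ hβ (by rw [hτrl, hγ0]) (by rw [hτr0, hβ0])
    (by rw [hγl, hβl]) t.rev
  have hβtr : β t.rev = x * α t := by simp only [hβdef, Fin.rev_rev]
  rw [hβtr] at hPd
  rcases hPmem with hP | hP
  · -- P on tau (reversed); second slim application on tau
    obtain ⟨i₀, rfl⟩ := hP
    obtain ⟨Q, hQmem, hQd⟩ := slim_apply hhyp hα hσ hτ (by rw [hαl, hσ0]) (by rw [hα0, hτ0])
      (by rw [hσl, hτl]) i₀.rev
    have hτeq : τ i₀.rev = τr i₀ := rfl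
    rw [← hτeq] at hPd
    have hxQ : (wordDist S (x * α t) Q : ℝ) ≤ 2 * δ := by
      have := tri (x * α t) (τ i₀.rev) Q
      linarith
    rcases hQmem with hQ | hQ
    · -- Q = alpha i2
      obtain ⟨i₂, rfl⟩ := hQ
      have hai2 : (wordLength S (α i₂) : ℝ) = ((i₂ : ℕ) : ℝ) := geo_pos_r hα hα0 i₂
      have hd1ai2 : (wordDist S 1 (α i₂) : ℝ) = ((i₂ : ℕ) : ℝ) := by rw [wd_one]; exact hai2
      have hdai2v : (wordDist S (α i₂) v : ℝ) = (p : ℝ) - ((i₂ : ℕ) : ℝ) :=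
        geo_dist_last_r hα hαl i₂
      -- lower bound on i2 : i2 >= n - t - 2 delta
      have hlow : (n : ℝ) - ((t : ℕ) : ℝ) - 2 * δ ≤ ((i₂ : ℕ) : ℝ) := by
        have h1 := tri 1 (x * α t) x
        have h2 := tri 1 (α i₂) (x * α t)
        rw [hnx, hdxat] at h1
        rw [hd1ai2] at h2
        have h3 : (wordDist S (α i₂) (x * α t) : ℝ) ≤ 2 * δ := by rw [symm]; exact hxQ
        linarith
      -- upper bound on i2 : i2 <= t + 2 delta + B
      have hvx : (p : ℝ) - B ≤ (wordDist S v x : ℝ) := by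
        have heq : wordDist S v x = wordLength S (s * v⁻¹) := by
          unfold wordDist
          congr 1
          rw [hx]
          group
        have hv1 : (wordLength S v⁻¹ : ℝ) ≤ (wordLength S s⁻¹ : ℝ) + (wordLength S (s * v⁻¹) : ℝ) := by
          have := wl_mul hSsymm hSgen s⁻¹ (s * v⁻¹)
          have he : s⁻¹ * (s * v⁻¹) = v⁻¹ := by group
          rw [he] at this
          exact_mod_cast this
        have hvinv : (wordLength S v⁻¹ : ℝ) = (wordLength S v : ℝ) := by
          rw [wl_inv hSsymm hSgen]
        have hsinv : (wordLength S s⁻¹ : ℝ) = (wordLength S s : ℝ) := by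
          rw [wl_inv hSsymm hSgen]
        have hvp : (wordLength S v : ℝ) = (p : ℝ) := by rw [← wd_one]; exact hpv
        rw [heq]
        rw [hvinv, hsinv, hvp] at hv1
        linarith
      have hup : ((i₂ : ℕ) : ℝ) ≤ ((t : ℕ) : ℝ) + 2 * δ + B := by
        have h3 : (wordDist S v (α i₂) : ℝ) = (p : ℝ) - ((i₂ : ℕ) : ℝ) := by
          rw [symm]; exact hdai2v
        have h4 : (wordDist S (α i₂) (x * α t) : ℝ) ≤ 2 * δ := by rw [symm]; exact hxQ
        have t1 := tri v (α i₂) x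
        have t2 := tri (α i₂) (x * α t) x
        rw [h3] at t1
        rw [hdxat] at t2
        linarith [hvx]
      -- assemble
      have habs : (wordDist S (α t) (α i₂) : ℝ) ≤ A + 6 * δ + B := by
        rw [geo_dist_r hα t i₂]
        rw [abs_le]
        constructor
        · linarith
        · linarith
      have hfin := tri (γ j) (α t) (x * γ j)
      have hfin2 := tri (α t) (α i₂) (x * γ j)
      have hfin3 := tri (α i₂) (x * α t) (x * γ j)
      have hxQ2 : (wordDist S (α i₂) (x * α t) : ℝ) ≤ 2 * δ := by rw [symm]; exact hxQ
      have hlast : (wordDist S (x * α t) (x * γ j) : ℝ) ≤ 2 * δ := by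
        rw [wd_left_r, symm]
        exact hclose
      linarith
    · -- Q = sigma q : near the corner v
      obtain ⟨q, rfl⟩ := hQ
      have hσq : (wordDist S (σ q) (v * s) : ℝ) ≤ B := by
        have h := geo_dist_last_r hσ hσl q
        rw [h]
        have h1 : (0 : ℝ) ≤ ((q : ℕ) : ℝ) := Nat.cast_nonneg _
        linarith [hNσ]
      have hxat_vs : (wordDist S (x * α t) (v * s) : ℝ) ≤ 2 * δ + B := by
        have := tri (x * α t) (σ q) (v * s)
        linarith
      have hatv : (wordDist S (α t) v : ℝ) ≤ 2 * δ + B := by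
        have h1 : (wordDist S (x * α t) (x * v) : ℝ) = (wordDist S (α t) v : ℝ) :=
          wd_left_r _ _ _
        rw [hxv] at h1
        linarith [hxat_vs, h1.symm.le, h1.le]
      have hjv : (wordDist S (γ j) v : ℝ) ≤ 4 * δ + B := by
        have := tri (γ j) (α t) v
        linarith
      have hvs : (wordDist S v (x * v) : ℝ) ≤ B := by
        rw [hxv]
        have : wordDist S v (v * s) = wordLength S s := by
          unfold wordDist; congr 1; group
        rw [this]
        exact hs
      have hfin := tri (γ j) v (x * γ j)
      have hfin2 := tri v (x * v) (x * γ j)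
      have hfin3 : (wordDist S (x * v) (x * γ j) : ℝ) = (wordDist S v (γ j) : ℝ) :=
        wd_left_r _ _ _
      have hfin4 : (wordDist S v (γ j) : ℝ) ≤ 4 * δ + B := by rw [symm]; exact hjv
      have hA0 : 0 ≤ A := abs_nonneg _
      linarith
  · -- P = gamma i : direct case
    obtain ⟨i, rfl⟩ := hP
    have hdix : (wordDist S (γ i) x : ℝ) = (n : ℝ) - ((i : ℕ) : ℝ) :=
      geo_dist_last_r hγ hγl i
    -- |(n - i) - t| <= delta
    have hpos1 : (n : ℝ) - ((i : ℕ) : ℝ) ≤ ((t : ℕ) : ℝ) + δ := by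
      have := tri (γ i) (x * α t) x
      rw [hdix, hdxat] at this
      have h2 : (wordDist S (γ i) (x * α t) : ℝ) ≤ δ := by rw [symm]; exact hPd
      linarith
    have hpos2 : ((t : ℕ) : ℝ) ≤ (n : ℝ) - ((i : ℕ) : ℝ) + δ := by
      have := tri (x * α t) (γ i) x
      rw [hdix, hdxat] at this
      linarith
    have habs : (wordDist S (γ j) (γ i) : ℝ) ≤ A + 3 * δ := by
      rw [geo_dist_r hγ j i, abs_le]
      constructor
      · linarith
      · linarith
    have hfin := tri (γ j) (γ i) (x * γ j)
    have hfin2 := tri (γ i) (x * α t) (x * γ j)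
    have hPd2 : (wordDist S (γ i) (x * α t) : ℝ) ≤ δ := by rw [symm]; exact hPd
    have hlast : (wordDist S (x * α t) (x * γ j) : ℝ) ≤ 2 * δ := by
      rw [wd_left_r, symm]
      exact hclose
    linarith

lemma key (hSsymm : ∀ s ∈ S, s⁻¹ ∈ S) (hSgen : Subgroup.closure S = ⊤)
    {δ : ℝ} (hδ : 0 ≤ δ) (hhyp : WordSlimTriangles S δ)
    {B : ℝ} (x v s : G) (hx : x = v * s * v⁻¹) (hs : (wordLength S s : ℝ) ≤ B)
    {n : ℕ} {γ : Fin (n + 1) → G} (hγ : IsWordGeodesic S n γ)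
    (hγ0 : γ 0 = 1) (hγl : γ (Fin.last n) = x) (j : Fin (n + 1)) :
    (wordDist S (γ j) (x * γ j) : ℝ) ≤ |(n : ℝ) - 2 * ((j : ℕ) : ℝ)| + 12 * δ + 3 * B := by
  have tri := wd_tri_r (S := S) hSsymm hSgen
  have symm := wd_symm_r (S := S) hSsymm hSgen
  have hB0 : (0 : ℝ) ≤ B := le_trans (by positivity) hs
  have hA0 : (0 : ℝ) ≤ |(n : ℝ) - 2 * ((j : ℕ) : ℝ)| := abs_nonneg _
  have hxv : x * v = v * s := by rw [hx]; group
  obtain ⟨α, hα, hα0, hαl⟩ := geodesic_exists hSsymm hSgen 1 v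
  obtain ⟨σ, hσ, hσ0, hσl⟩ := geodesic_exists hSsymm hSgen v (v * s)
  obtain ⟨η, hη, hη0, hηl⟩ := geodesic_exists hSsymm hSgen v x
  have hNσ : ((wordDist S v (v * s) : ℕ) : ℝ) ≤ B := by
    have h : wordDist S v (v * s) = wordLength S s := by
      unfold wordDist; congr 1; group
    rw [h]; exact hs
  obtain ⟨P, hPmem, hPd⟩ := slim_apply hhyp hα hη hγ (by rw [hαl, hη0])
    (by rw [hα0, hγ0]) (by rw [hηl, hγl]) j
  rcases hPmem with hP | hP
  · -- close to alpha
    obtain ⟨t, rfl⟩ := hP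
    exact key_alpha hSsymm hSgen hδ hhyp x v s hx hs hγ hγ0 hγl hα hα0 hαl j t
      (by linarith)
  · -- close to eta; second slim
    obtain ⟨i, rfl⟩ := hP
    set β : Fin (wordDist S 1 v + 1) → G := fun i => x * α i.rev with hβdef
    have hβ : IsWordGeodesic S _ β := geodesic_translate x (geodesic_rev hα)
    have hβ0 : β 0 = v * s := by
      simp only [hβdef, Fin.rev_zero]
      rw [hαl, hxv]
    have hβl : β (Fin.last _) = x := by
      simp only [hβdef, Fin.rev_last]
      rw [hα0, mul_one]
    obtain ⟨Q, hQmem, hQd⟩ := slim_apply hhyp hσ hβ hη (by rw [hσl, hβ0])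
      (by rw [hσ0, hη0]) (by rw [hβl, hηl]) i
    have hjQ : (wordDist S (γ j) Q : ℝ) ≤ 2 * δ := by
      have := tri (γ j) (η i) Q
      linarith
    rcases hQmem with hQ | hQ
    · -- Q on sigma: near corner v
      obtain ⟨q, rfl⟩ := hQ
      have hvq : (wordDist S v (σ q) : ℝ) = ((q : ℕ) : ℝ) := by
        have h := geo_dist_r hσ 0 q
        rw [hσ0] at h
        simpa using h
      have hqB : ((q : ℕ) : ℝ) ≤ B := by
        have h1 : ((q : ℕ) : ℝ) ≤ ((wordDist S v (v * s) : ℕ) : ℝ) := by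
          exact_mod_cast Nat.lt_succ_iff.mp q.isLt
        linarith
      have hjv : (wordDist S (γ j) v : ℝ) ≤ 2 * δ + B := by
        have h1 := tri (γ j) (σ q) v
        have h2 : (wordDist S (σ q) v : ℝ) = ((q : ℕ) : ℝ) := by rw [symm]; exact hvq
        linarith
      have hvxv : (wordDist S v (x * v) : ℝ) ≤ B := by
        rw [hxv]
        have h : wordDist S v (v * s) = wordLength S s := by
          unfold wordDist; congr 1; group
        rw [h]; exact hs
      have hfin := tri (γ j) v (x * γ j)
      have hfin2 := tri v (x * v) (x * γ j)
      have hfin3 : (wordDist S (x * v) (x * γ j) : ℝ) = (wordDist S v (γ j) : ℝ) :=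
        wd_left_r _ _ _
      have hfin4 : (wordDist S v (γ j) : ℝ) ≤ 2 * δ + B := by rw [symm]; exact hjv
      linarith
    · -- Q on beta: use inverse configuration
      obtain ⟨u, rfl⟩ := hQ
      have hβu : β u = x * α u.rev := rfl
      set γ' : Fin (n + 1) → G := fun i => x⁻¹ * γ i.rev with hγ'def
      have hγ' : IsWordGeodesic S n γ' := geodesic_translate x⁻¹ (geodesic_rev hγ)
      have hγ'0 : γ' 0 = 1 := by
        simp only [hγ'def, Fin.rev_zero]
        rw [hγl]
        group
      have hγ'l : γ' (Fin.last n) = x⁻¹ := by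
        simp only [hγ'def, Fin.rev_last]
        rw [hγ0, mul_one]
      have hxinv : x⁻¹ = v * s⁻¹ * v⁻¹ := by rw [hx]; group
      have hsinv : (wordLength S s⁻¹ : ℝ) ≤ B := by
        rw [wl_inv hSsymm hSgen]; exact hs
      have hγ'jrev : γ' j.rev = x⁻¹ * γ j := by
        simp only [hγ'def, Fin.rev_rev]
      have hclose' : (wordDist S (γ' j.rev) (α u.rev) : ℝ) ≤ 2 * δ := by
        rw [hγ'jrev]
        have h1 : (wordDist S (x * (x⁻¹ * γ j)) (x * α u.rev) : ℝ)
            = (wordDist S (x⁻¹ * γ j) (α u.rev) : ℝ) := wd_left_r _ _ _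
        have h2 : x * (x⁻¹ * γ j) = γ j := by group
        rw [h2] at h1
        rw [← h1, ← hβu]
        linarith
      have hres := key_alpha hSsymm hSgen hδ hhyp x⁻¹ v s⁻¹ hxinv hsinv hγ' hγ'0 hγ'l
        hα hα0 hαl j.rev u.rev hclose'
      have hLHS : wordDist S (γ' j.rev) (x⁻¹ * γ' j.rev) = wordDist S (γ j) (x * γ j) := by
        rw [hγ'jrev]
        have h1 : wordDist S (x⁻¹ * γ j) (x⁻¹ * (x⁻¹ * γ j))
            = wordDist S (γ j) (x⁻¹ * γ j) := by
          have := wd_left (S := S) x (x⁻¹ * γ j) (x⁻¹ * (x⁻¹ * γ j))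
          rw [show x * (x⁻¹ * γ j) = γ j by group,
            show x * (x⁻¹ * (x⁻¹ * γ j)) = x⁻¹ * γ j by group] at this
          exact this.symm ▸ this
        rw [show x⁻¹ * (x⁻¹ * γ j) = x⁻¹ * (x⁻¹ * γ j) from rfl]
        calc wordDist S (x⁻¹ * γ j) (x⁻¹ * (x⁻¹ * γ j))
            = wordDist S (γ j) (x⁻¹ * γ j) := by
              have := wd_left (S := S) x⁻¹ (γ j) (x⁻¹ * γ j)
              exact this
          _ = wordDist S (γ j) (x * γ j) := by
              unfold wordDist
              rw [← wl_inv hSsymm hSgen ((γ j)⁻¹ * (x * γ j))]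
              congr 1
              group
      have hjrev : ((j.rev : ℕ) : ℝ) = (n : ℝ) - ((j : ℕ) : ℝ) := by
        have h1 : (j : ℕ) ≤ n := Nat.lt_succ_iff.mp j.isLt
        have h2 : (j.rev : ℕ) = n - (j : ℕ) := by rw [Fin.val_rev]; omega
        rw [h2]
        push_cast [Nat.cast_sub h1]
        ring
      rw [hLHS] at hres
      rw [hjrev] at hres
      have habs : |(n : ℝ) - 2 * ((n : ℝ) - ((j : ℕ) : ℝ))|
          = |(n : ℝ) - 2 * ((j : ℕ) : ℝ)| := by
        rw [show (n : ℝ) - 2 * ((n : ℝ) - ((j : ℕ) : ℝ))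
          = -((n : ℝ) - 2 * ((j : ℕ) : ℝ)) by ring, abs_neg]
      rw [habs] at hres
      exact hres

lemma wl_mul_r (hSsymm : ∀ s ∈ S, s⁻¹ ∈ S) (hSgen : Subgroup.closure S = ⊤) (x y : G) :
    (wordLength S (x * y) : ℝ) ≤ (wordLength S x : ℝ) + (wordLength S y : ℝ) := by
  exact_mod_cast wl_mul hSsymm hSgen x y

set_option maxHeartbeats 1000000 in
theorem statement4' {G : Type*} [Group G]
    (S : Set G) (hSsymm : ∀ s ∈ S, s⁻¹ ∈ S) (hSgen : Subgroup.closure S = ⊤)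
    (δ : ℝ) (hδ : 0 ≤ δ) (hhyp : WordSlimTriangles S δ)
    (K : ℝ) (hK : 1 ≤ K) (hcb : ∀ a b : G, IsConj a b →
      ∃ v : G, a = v * b * v⁻¹ ∧
        (wordLength S v : ℝ) ≤ K * ((wordLength S a : ℝ) + (wordLength S b : ℝ)))
    (B : ℝ) (hB : 1 ≤ B) (g : G) :
    ∃ L : ℝ, 0 ≤ L ∧
      ∀ R : Set G, (∀ r ∈ R, ∃ s : G, IsConj r s ∧ (wordLength S s : ℝ) ≤ B) →
        ∀ r ∈ R, r * g ∈ R →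
          ∃ c : G, c * g = g * c ∧ (wordDist S r c : ℝ) ≤ (wordLength S c : ℝ) + L := by
  have tri := wd_tri_r (S := S) hSsymm hSgen
  have symm := wd_symm_r (S := S) hSsymm hSgen
  set gl : ℝ := (wordLength S g : ℝ) with hgldef
  have hgl0 : 0 ≤ gl := Nat.cast_nonneg _
  set C₁ : ℝ := 12 * δ + 3 * B + 1 with hC₁def
  set C₂ : ℝ := 2 * δ + 4 * gl + 2 with hC₂def
  set D : ℝ := 2 * C₁ + 2 * C₂ with hDdef
  have hC₁0 : 0 ≤ C₁ := by rw [hC₁def]; nlinarith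
  have hC₂0 : 0 ≤ C₂ := by rw [hC₂def]; nlinarith
  have hD0 : 0 ≤ D := by rw [hDdef]; nlinarith
  have hK0 : 0 ≤ K := by linarith
  clear_value gl C₁ C₂ D
  refine ⟨2 * K * (gl + D) + 1, by nlinarith, ?_⟩
  intro R hR r hr hrg
  obtain ⟨s₁, hconj₁, hs₁⟩ := hR r hr
  obtain ⟨c₁, hc₁⟩ := isConj_iff.mp hconj₁
  obtain ⟨s₂, hconj₂, hs₂⟩ := hR (r * g) hrg
  obtain ⟨c₂, hc₂⟩ := isConj_iff.mp hconj₂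
  obtain ⟨N₁, hN₁, γ₁, hγ₁, hγ₁0, hγ₁l⟩ :
      ∃ N₁ : ℕ, (N₁ : ℕ) = wordDist S 1 r ∧ ∃ γ₁ : Fin (N₁ + 1) → G,
        IsWordGeodesic S N₁ γ₁ ∧ γ₁ 0 = 1 ∧ γ₁ (Fin.last N₁) = r :=
    ⟨_, rfl, geodesic_exists hSsymm hSgen 1 r⟩
  obtain ⟨N₂, hN₂, γ₂, hγ₂, hγ₂0, hγ₂l⟩ :
      ∃ N₂ : ℕ, (N₂ : ℕ) = wordDist S 1 (r * g) ∧ ∃ γ₂ : Fin (N₂ + 1) → G,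
        IsWordGeodesic S N₂ γ₂ ∧ γ₂ 0 = 1 ∧ γ₂ (Fin.last N₂) = r * g :=
    ⟨_, rfl, geodesic_exists hSsymm hSgen 1 (r * g)⟩
  set k₁ : Fin (N₁ + 1) := ⟨N₁ / 2, by omega⟩ with hk₁def
  set k₂ : Fin (N₂ + 1) := ⟨N₂ / 2, by omega⟩ with hk₂def
  set m₁ : G := γ₁ k₁ with hm₁def
  set m₂ : G := γ₂ k₂ with hm₂def
  have hd1r : (wordDist S 1 r : ℝ) = (N₁ : ℝ) := by rw [hN₁]
  have hd1rg : (wordDist S 1 (r * g) : ℝ) = (N₂ : ℝ) := by rw [hN₂]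
  have hk₁v : (k₁ : ℕ) = N₁ / 2 := rfl
  have hk₂v : (k₂ : ℕ) = N₂ / 2 := rfl
  have hk₁r : 2 * ((k₁ : ℕ) : ℝ) ≤ (N₁ : ℝ) ∧ (N₁ : ℝ) ≤ 2 * ((k₁ : ℕ) : ℝ) + 1 := by
    have h1 : 2 * (k₁ : ℕ) ≤ N₁ := by rw [hk₁v]; omega
    have h2 : N₁ ≤ 2 * (k₁ : ℕ) + 1 := by rw [hk₁v]; omega
    exact ⟨by exact_mod_cast h1, by exact_mod_cast h2⟩
  have hk₂r : 2 * ((k₂ : ℕ) : ℝ) ≤ (N₂ : ℝ) ∧ (N₂ : ℝ) ≤ 2 * ((k₂ : ℕ) : ℝ) + 1 := by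
    have h1 : 2 * (k₂ : ℕ) ≤ N₂ := by rw [hk₂v]; omega
    have h2 : N₂ ≤ 2 * (k₂ : ℕ) + 1 := by rw [hk₂v]; omega
    exact ⟨by exact_mod_cast h1, by exact_mod_cast h2⟩
  -- conjugation data
  have hxr : r = c₁⁻¹ * s₁ * (c₁⁻¹)⁻¹ := by rw [← hc₁]; group
  have hxrg : r * g = c₂⁻¹ * s₂ * (c₂⁻¹)⁻¹ := by rw [← hc₂]; group
  -- key applications
  have habs₁ : |(N₁ : ℝ) - 2 * ((k₁ : ℕ) : ℝ)| ≤ 1 := by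
    rw [abs_le]; constructor <;> linarith [hk₁r.1, hk₁r.2]
  have habs₂ : |(N₂ : ℝ) - 2 * ((k₂ : ℕ) : ℝ)| ≤ 1 := by
    rw [abs_le]; constructor <;> linarith [hk₂r.1, hk₂r.2]
  have e₁ : (wordDist S m₁ (r * m₁) : ℝ) ≤ C₁ := by
    have h := key hSsymm hSgen hδ hhyp r c₁⁻¹ s₁ hxr hs₁ hγ₁ hγ₁0 hγ₁l k₁
    rw [hC₁def]
    linarith
  have e₂ : (wordDist S m₂ ((r * g) * m₂) : ℝ) ≤ C₁ := by
    have h := key hSsymm hSgen hδ hhyp (r * g) c₂⁻¹ s₂ hxrg hs₂ hγ₂ hγ₂0 hγ₂l k₂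
    rw [hC₁def]
    linarith
  -- midpoints are close
  have hm₁pos : (wordLength S m₁ : ℝ) = ((k₁ : ℕ) : ℝ) := geo_pos_r hγ₁ hγ₁0 k₁
  have hm₂pos : (wordLength S m₂ : ℝ) = ((k₂ : ℕ) : ℝ) := geo_pos_r hγ₂ hγ₂0 k₂
  have hd1m₁ : (wordDist S 1 m₁ : ℝ) = ((k₁ : ℕ) : ℝ) := by rw [wd_one]; exact hm₁pos
  have hd1m₂ : (wordDist S 1 m₂ : ℝ) = ((k₂ : ℕ) : ℝ) := by rw [wd_one]; exact hm₂pos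
  have hdrrg : (wordDist S r (r * g) : ℝ) = gl := by
    have h : wordDist S r (r * g) = wordLength S g := by
      unfold wordDist; congr 1; group
    rw [h, hgldef]
  have hN₁N₂ : |(N₁ : ℝ) - (N₂ : ℝ)| ≤ gl := by
    rw [abs_le]
    have h1 := tri 1 r (r * g)
    have h2 := tri 1 (r * g) r
    have h3 : (wordDist S (r * g) r : ℝ) = gl := by rw [symm]; exact hdrrg
    rw [hdrrg, hd1r, hd1rg] at h1
    rw [h3, hd1r, hd1rg] at h2
    constructor <;> [linarith; linarith]
  obtain ⟨ρ, hρ, hρ0, hρl⟩ := geodesic_exists hSsymm hSgen r (r * g)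
  have hNρ : ((wordDist S r (r * g) : ℕ) : ℝ) = gl := hdrrg
  obtain ⟨P, hPmem, hPd⟩ := slim_apply hhyp hγ₁ hρ hγ₂ (by rw [hγ₁l, hρ0])
    (by rw [hγ₁0, hγ₂0]) (by rw [hρl, hγ₂l]) k₂
  have hF : (wordDist S m₁ m₂ : ℝ) ≤ C₂ := by
    have hA1 : (N₁ : ℝ) - (N₂ : ℝ) ≤ gl := by
      have := abs_le.mp hN₁N₂; linarith [this.2]
    have hA2 : (N₂ : ℝ) - (N₁ : ℝ) ≤ gl := by
      have := abs_le.mp hN₁N₂; linarith [this.1]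
    rcases hPmem with hP | hP
    · obtain ⟨i, rfl⟩ := hP
      have hipos : (wordDist S 1 (γ₁ i) : ℝ) = ((i : ℕ) : ℝ) := by
        rw [wd_one]; exact geo_pos_r hγ₁ hγ₁0 i
      have hi1 : ((i : ℕ) : ℝ) ≤ ((k₂ : ℕ) : ℝ) + δ := by
        have h1 := tri 1 m₂ (γ₁ i)
        rw [hipos, hd1m₂] at h1
        have h2 : (wordDist S m₂ (γ₁ i) : ℝ) ≤ δ := hPd
        linarith
      have hi2 : ((k₂ : ℕ) : ℝ) ≤ ((i : ℕ) : ℝ) + δ := by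
        have h1 := tri 1 (γ₁ i) m₂
        rw [hipos, hd1m₂] at h1
        have h2 : (wordDist S (γ₁ i) m₂ : ℝ) ≤ δ := by rw [symm]; exact hPd
        linarith
      have hdm₁i : (wordDist S m₁ (γ₁ i) : ℝ) = |((k₁ : ℕ) : ℝ) - ((i : ℕ) : ℝ)| :=
        geo_dist_r hγ₁ k₁ i
      have habs : |((k₁ : ℕ) : ℝ) - ((i : ℕ) : ℝ)| ≤ gl / 2 + 1 / 2 + δ := by
        rw [abs_le]
        constructor
        · linarith [hA1, hA2, hi1, hi2, hk₁r.1, hk₁r.2, hk₂r.1, hk₂r.2]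
        · linarith [hA1, hA2, hi1, hi2, hk₁r.1, hk₁r.2, hk₂r.1, hk₂r.2]
      have h1 := tri m₁ (γ₁ i) m₂
      rw [hdm₁i] at h1
      have h2 : (wordDist S (γ₁ i) m₂ : ℝ) ≤ δ := by rw [symm]; exact hPd
      rw [hC₂def]
      linarith
    · obtain ⟨u, rfl⟩ := hP
      have hru : (wordDist S r (ρ u) : ℝ) ≤ gl := by
        have h := geo_dist_r hρ 0 u
        rw [hρ0] at h
        rw [h]
        simp only [Fin.val_zero, Nat.cast_zero, zero_sub, abs_neg, abs_of_nonneg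
          (by positivity : (0 : ℝ) ≤ ((u : ℕ) : ℝ))]
        calc ((u : ℕ) : ℝ) ≤ ((wordDist S r (r * g) : ℕ) : ℝ) := by
              exact_mod_cast Nat.lt_succ_iff.mp u.isLt
          _ = gl := hNρ
      have hm₂r : (wordDist S m₂ r : ℝ) ≤ δ + gl := by
        have h1 := tri m₂ (ρ u) r
        have h2 : (wordDist S (ρ u) r : ℝ) ≤ gl := by rw [symm]; exact hru
        linarith
      have hN₁small : (N₁ : ℝ) ≤ 2 * δ + 3 * gl + 1 := by
        have h1 := tri 1 m₂ r
        rw [hd1m₂, hd1r] at h1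
        linarith [hA1, hA2, hm₂r, hk₂r.1, hk₂r.2]
      have h1 := tri m₁ 1 m₂
      have h2 : (wordDist S m₁ 1 : ℝ) = ((k₁ : ℕ) : ℝ) := by rw [symm]; exact hd1m₁
      rw [h2, hd1m₂] at h1
      rw [hC₂def]
      linarith [hN₁small, hA1, hA2, hk₁r.1, hk₁r.2, hk₂r.1, hk₂r.2]
  -- bound on the conjugate of g at m₁
  have e₁' : (wordLength S (m₁⁻¹ * (r * m₁)) : ℝ) ≤ C₁ := e₁
  have e₂' : (wordLength S (m₂⁻¹ * ((r * g) * m₂)) : ℝ) ≤ C₁ := e₂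
  have hF' : (wordLength S (m₁⁻¹ * m₂) : ℝ) ≤ C₂ := hF
  have hF'' : (wordLength S (m₂⁻¹ * m₁) : ℝ) ≤ C₂ := by
    have h : (wordDist S m₂ m₁ : ℝ) ≤ C₂ := by rw [symm]; exact hF
    exact h
  have hrinv : (wordLength S (m₁⁻¹ * (r⁻¹ * m₁)) : ℝ) ≤ C₁ := by
    have heq : wordLength S (m₁⁻¹ * (r⁻¹ * m₁)) = wordLength S ((m₁⁻¹ * (r * m₁))⁻¹) := by
      congr 1; group
    rw [heq, wl_inv hSsymm hSgen]
    exact e₁'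
  have hh : (wordLength S (m₁⁻¹ * g * m₁) : ℝ) ≤ D := by
    have hsplit : m₁⁻¹ * g * m₁
        = (m₁⁻¹ * (r⁻¹ * m₁)) * ((m₁⁻¹ * m₂) * ((m₂⁻¹ * ((r * g) * m₂)) * (m₂⁻¹ * m₁))) := by
      group
    rw [hsplit]
    have t1 := wl_mul_r hSsymm hSgen (m₁⁻¹ * (r⁻¹ * m₁))
      ((m₁⁻¹ * m₂) * ((m₂⁻¹ * ((r * g) * m₂)) * (m₂⁻¹ * m₁)))
    have t2 := wl_mul_r hSsymm hSgen (m₁⁻¹ * m₂) ((m₂⁻¹ * ((r * g) * m₂)) * (m₂⁻¹ * m₁))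
    have t3 := wl_mul_r hSsymm hSgen (m₂⁻¹ * ((r * g) * m₂)) (m₂⁻¹ * m₁)
    rw [hDdef]
    linarith
  -- conjugacy bound
  have hconj : IsConj g (m₁⁻¹ * g * m₁) := isConj_iff.mpr ⟨m₁⁻¹, by group⟩
  obtain ⟨u, hu, hub⟩ := hcb g (m₁⁻¹ * g * m₁) hconj
  have hubound : (wordLength S u : ℝ) ≤ K * (gl + D) := by
    calc (wordLength S u : ℝ) ≤ K * ((wordLength S g : ℝ) + (wordLength S (m₁⁻¹ * g * m₁) : ℝ)) := hub
      _ ≤ K * (gl + D) := by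
          apply mul_le_mul_of_nonneg_left _ hK0
          rw [← hgldef] at *
          linarith
  refine ⟨m₁ * u⁻¹, ?_, ?_⟩
  · -- commutes with g
    have h2 : u⁻¹ * g * u = m₁⁻¹ * g * m₁ := by
      conv_lhs => rw [hu]
      group
    have h5 : (m₁ * u⁻¹) * g * (m₁ * u⁻¹)⁻¹ = g := by
      rw [show (m₁ * u⁻¹) * g * (m₁ * u⁻¹)⁻¹ = m₁ * (u⁻¹ * g * u) * m₁⁻¹ by group, h2]
      group
    have h6 := congrArg (· * (m₁ * u⁻¹)) h5
    simpa [mul_assoc] using h6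
  · -- distance estimate
    have hdm₁c : (wordDist S m₁ (m₁ * u⁻¹) : ℝ) = (wordLength S u : ℝ) := by
      have h : wordDist S m₁ (m₁ * u⁻¹) = wordLength S u⁻¹ := by
        unfold wordDist; congr 1; group
      rw [h, wl_inv hSsymm hSgen]
    have hdrm₁ : (wordDist S r m₁ : ℝ) = (N₁ : ℝ) - ((k₁ : ℕ) : ℝ) := by
      rw [symm]
      exact geo_dist_last_r hγ₁ hγ₁l k₁
    have hclen : (wordLength S m₁ : ℝ) ≤ (wordLength S (m₁ * u⁻¹) : ℝ) + (wordLength S u : ℝ) := by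
      have h := wl_mul_r hSsymm hSgen (m₁ * u⁻¹) u
      rw [show m₁ * u⁻¹ * u = m₁ by group] at h
      exact h
    have htri := tri r m₁ (m₁ * u⁻¹)
    rw [hdrm₁, hdm₁c] at htri
    rw [hm₁pos] at hclen
    have hu2 : 2 * (wordLength S u : ℝ) ≤ 2 * K * (gl + D) := by linarith
    linarith [hk₁r.2, hu2]

end S4

/-- Suppose the word metric of a symmetric generating set `S` on `G` is `δ`-hyperbolic and
`G` has conjugacy bounds with constant `K ≥ 1`.  Let `B ≥ 1` and `g ∈ G`.  Then there is a
constant `L ≥ 0`, depending only on `B`, `∥g∥`, `δ` and `K`, such that for every set `R`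
of elements each conjugate to an element of word length at most `B`, every `r ∈ R ∩ Rg`
lies in the `L`-horoball neighbourhood of the centralizer `C(g)`: for every `r ∈ R` with
`rg ∈ R` there is `c` commuting with `g` such that `d(r, c) ≤ ∥c∥ + L`. -/


theorem statement4 {G : Type*} [Group G]
    (S : Set G) (hSsymm : ∀ s ∈ S, s⁻¹ ∈ S) (hSgen : Subgroup.closure S = ⊤)
    (δ : ℝ) (hδ : 0 ≤ δ) (hhyp : WordSlimTriangles S δ)
    (K : ℝ) (hK : 1 ≤ K) (hcb : HasConjugacyBounds S K)
    (B : ℝ) (hB : 1 ≤ B) (g : G) :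
    ∃ L : ℝ, 0 ≤ L ∧
      ∀ R : Set G, (∀ r ∈ R, ∃ s : G, IsConj r s ∧ (wordLength S s : ℝ) ≤ B) →
        ∀ r ∈ R, r * g ∈ R →
          ∃ c : G, c * g = g * c ∧ (wordDist S r c : ℝ) ≤ (wordLength S c : ℝ) + L :=
  S4.statement4' S hSsymm hSgen δ hδ hhyp K hK hcb B hB g
end

section
/- Let G be a group acting on a set X, and let S be a subsemigroup of G whose elements generate G as a group. If x ∈ X is a point whose S-orbit { s • x : s ∈ S } is finite, then the full G-orbit { g • x : g ∈ G } of x is finite; in fact G • x ⊆ (S • x) ∪ {x}. -/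
open Pointwise

/-- Let a group `G` act on a set `X`, and let `S` be a subsemigroup of `G` whose elements
generate `G` as a group.  If `x ∈ X` has finite `S`-orbit, then the full `G`-orbit of `x`
is finite; in fact `G • x ⊆ (S • x) ∪ {x}`. -/
theorem statement6 {G X : Type*} [Group G] [MulAction G X]
    (S : Subsemigroup G) (hgen : Subgroup.closure (S : Set G) = ⊤)
    (x : X) (hfin : {y : X | ∃ s ∈ S, s • x = y}.Finite) :
    {y : X | ∃ g : G, g • x = y}.Finite ∧
      {y : X | ∃ g : G, g • x = y} ⊆ {y : X | ∃ s ∈ S, s • x = y} ∪ {x} := by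
  set T : Set X := {y : X | ∃ s ∈ S, s • x = y} ∪ {x} with hT
  have hTfin : T.Finite := hfin.union (Set.finite_singleton x)
  have hxT : x ∈ T := Or.inr rfl
  have hmaps : ∀ s ∈ S, s • T ⊆ T := by
    rintro s hs y ⟨z, hz, rfl⟩
    left
    rcases hz with ⟨t, ht, rfl⟩ | rfl
    · exact ⟨s * t, S.mul_mem hs ht, (smul_smul s t x).symm⟩
    · exact ⟨s, hs, rfl⟩
  have heq : ∀ s ∈ S, s • T = T := by
    intro s hs
    apply Set.eq_of_subset_of_ncard_le (hmaps s hs) _ hTfin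
    rw [Set.ncard_smul_set]
  have key : ∀ g : G, g • T = T := by
    intro g
    have hg : g ∈ Subgroup.closure (S : Set G) := hgen ▸ Subgroup.mem_top g
    induction hg using Subgroup.closure_induction with
    | mem s hs => exact heq s hs
    | one => simp
    | mul a b _ _ ha hb => rw [mul_smul, hb, ha]
    | inv a _ ha => rw [← ha, inv_smul_smul, ha]
  have horb : {y : X | ∃ g : G, g • x = y} ⊆ T := by
    rintro y ⟨g, rfl⟩
    rw [← key g]
    exact ⟨x, hxT, rfl⟩
  exact ⟨hTfin.subset horb, horb⟩
end

section
/- Let X be a geodesic metric space that is δ-hyperbolic (every geodesic triangle is δ-slim) with δ > 0, let h : X → X be an isometry of finite order n ≥ 1 (so h^n = identity), and let K ≥ 6δ. Define fix_K(h) = { y ∈ X : d(y, h^k(y)) ≤ K for every integer k }. Then fix_K(h) is quasiconvex: for any a, b ∈ fix_K(h), any geodesic segment from a to b, and any point x on that geodesic, d(x, fix_K(h)) ≤ n(K + 2δ) + δ. -/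
/-- `γ` is a geodesic segment from `x` to `y`: it is parameterized by arclength on
`[0, dist x y]`, starting at `x` and ending at `y`. -/
def IsGeodesicSegment {X : Type*} [MetricSpace X] (γ : ℝ → X) (x y : X) : Prop :=
  γ 0 = x ∧ γ (dist x y) = y ∧
    ∀ s ∈ Set.Icc (0 : ℝ) (dist x y), ∀ t ∈ Set.Icc (0 : ℝ) (dist x y),
      dist (γ s) (γ t) = |s - t|

/-- `X` is a geodesic metric space: any two points are joined by a geodesic segment. -/
def GeodesicMetricSpace (X : Type*) [MetricSpace X] : Prop :=
  ∀ x y : X, ∃ γ : ℝ → X, IsGeodesicSegment γ x y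

/-- `X` is `δ`-hyperbolic (`δ`-slim triangles): every side of every geodesic triangle is
contained in the closed `δ`-neighbourhood of the union of the other two sides.  (Since
the quantification is over all vertices and all geodesics, and a reversed geodesic is a
geodesic, it suffices to require this for the side from `x` to `z`.) -/
def SlimTriangles (X : Type*) [MetricSpace X] (δ : ℝ) : Prop :=
  ∀ (x y z : X) (γ₁ γ₂ γ₃ : ℝ → X),
    IsGeodesicSegment γ₁ x y → IsGeodesicSegment γ₂ y z → IsGeodesicSegment γ₃ x z →
    ∀ t ∈ Set.Icc (0 : ℝ) (dist x z),
      ∃ p ∈ γ₁ '' Set.Icc (0 : ℝ) (dist x y) ∪ γ₂ '' Set.Icc (0 : ℝ) (dist y z),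
        dist (γ₃ t) p ≤ δ

namespace Stmt10Aux

variable {X : Type*} [MetricSpace X]

/-- distance from a point of a geodesic to the start. -/
lemma geo_dist_start {γ : ℝ → X} {x y : X} (hγ : IsGeodesicSegment γ x y)
    {s : ℝ} (hs : s ∈ Set.Icc (0:ℝ) (dist x y)) : dist (γ s) x = s := by
  have h0 : (0:ℝ) ∈ Set.Icc (0:ℝ) (dist x y) := ⟨le_refl _, dist_nonneg⟩
  have := hγ.2.2 s hs 0 h0
  rw [hγ.1] at this
  rw [this, sub_zero, abs_of_nonneg hs.1]

lemma geo_dist_end {γ : ℝ → X} {x y : X} (hγ : IsGeodesicSegment γ x y)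
    {s : ℝ} (hs : s ∈ Set.Icc (0:ℝ) (dist x y)) : dist (γ s) y = dist x y - s := by
  have hL : dist x y ∈ Set.Icc (0:ℝ) (dist x y) := ⟨dist_nonneg, le_refl _⟩
  have := hγ.2.2 s hs (dist x y) hL
  rw [hγ.2.1] at this
  rw [this, abs_of_nonpos (by linarith [hs.2])]
  ring

/-- Approximate midpoint lemma in a slim-triangles space. -/
lemma mid_lemma (δ : ℝ) (hgeo : GeodesicMetricSpace X) (hslim : SlimTriangles X δ)
    (y y' : X) :
    ∃ m : X, ∀ z : X, dist z m ≤ max (dist z y) (dist z y') - dist y y' / 2 + 2 * δ := by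
  obtain ⟨γ', hγ'⟩ := hgeo y y'
  set d := dist y y' with hd
  have hd0 : 0 ≤ d := dist_nonneg
  have hmem : d / 2 ∈ Set.Icc (0:ℝ) d := ⟨by linarith, by linarith⟩
  refine ⟨γ' (d/2), fun z => ?_⟩
  obtain ⟨γ₁, hγ₁⟩ := hgeo y z
  obtain ⟨γ₂, hγ₂⟩ := hgeo z y'
  obtain ⟨p, hp, hdp⟩ := hslim y z y' γ₁ γ₂ γ' hγ₁ hγ₂ hγ' (d/2) hmem
  have hmy : dist (γ' (d/2)) y = d / 2 := geo_dist_start hγ' hmem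
  have hmy' : dist (γ' (d/2)) y' = d / 2 := by
    have := geo_dist_end hγ' hmem; rw [← hd] at this; linarith
  rcases hp with ⟨u, hu, rfl⟩ | ⟨u, hu, rfl⟩
  · have hpy : dist (γ₁ u) y = u := geo_dist_start hγ₁ hu
    have hpz : dist (γ₁ u) z = dist y z - u := geo_dist_end hγ₁ hu
    have h1 : d/2 ≤ δ + u := by
      calc d/2 = dist (γ' (d/2)) y := hmy.symm
        _ ≤ dist (γ' (d/2)) (γ₁ u) + dist (γ₁ u) y := dist_triangle _ _ _
        _ ≤ δ + u := by rw [hpy]; linarith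
    have h2 : dist z (γ' (d/2)) ≤ dist y z - u + δ := by
      calc dist z (γ' (d/2)) ≤ dist z (γ₁ u) + dist (γ₁ u) (γ' (d/2)) := dist_triangle _ _ _
        _ ≤ dist y z - u + δ := by
            rw [dist_comm z (γ₁ u), hpz, dist_comm (γ₁ u) (γ' (d/2))]; linarith
    have h3 : dist z y ≤ max (dist z y) (dist z y') := le_max_left _ _
    rw [dist_comm y z] at h2
    linarith
  · have hpz : dist (γ₂ u) z = u := geo_dist_start hγ₂ hu
    have hpy' : dist (γ₂ u) y' = dist z y' - u := geo_dist_end hγ₂ hu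
    have h1 : d/2 ≤ δ + (dist z y' - u) := by
      calc d/2 = dist (γ' (d/2)) y' := hmy'.symm
        _ ≤ dist (γ' (d/2)) (γ₂ u) + dist (γ₂ u) y' := dist_triangle _ _ _
        _ ≤ δ + (dist z y' - u) := by rw [hpy']; linarith
    have h2 : dist z (γ' (d/2)) ≤ u + δ := by
      calc dist z (γ' (d/2)) ≤ dist z (γ₂ u) + dist (γ₂ u) (γ' (d/2)) := dist_triangle _ _ _
        _ ≤ u + δ := by rw [dist_comm z (γ₂ u), hpz, dist_comm (γ₂ u) (γ' (d/2))]; linarith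
    have h3 : dist z y' ≤ max (dist z y) (dist z y') := le_max_right _ _
    linarith

/-- Fellow-traveling: a point on a geodesic is close to any geodesic with K-close endpoints. -/
lemma fellow (δ : ℝ) (hδ : 0 < δ) (hgeo : GeodesicMetricSpace X) (hslim : SlimTriangles X δ)
    (K : ℝ) (hK0 : 0 ≤ K) {a b a' b' : X} (haa' : dist a a' ≤ K) (hbb' : dist b b' ≤ K)
    {γ γ' : ℝ → X} (hγ : IsGeodesicSegment γ a b) (hγ' : IsGeodesicSegment γ' a' b')
    {t : ℝ} (ht : t ∈ Set.Icc (0:ℝ) (dist a b)) :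
    ∃ s ∈ Set.Icc (0:ℝ) (dist a' b'), dist (γ t) (γ' s) ≤ K + 2 * δ := by
  obtain ⟨σ, hσ⟩ := hgeo a b'
  obtain ⟨τ, hτ⟩ := hgeo b' b
  obtain ⟨p, hp, hdp⟩ := hslim a b' b σ τ γ hσ hτ hγ t ht
  have hLmem : dist a' b' ∈ Set.Icc (0:ℝ) (dist a' b') := ⟨dist_nonneg, le_refl _⟩
  have h0mem : (0:ℝ) ∈ Set.Icc (0:ℝ) (dist a' b') := ⟨le_refl _, dist_nonneg⟩
  rcases hp with ⟨u, hu, rfl⟩ | ⟨u, hu, rfl⟩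
  · -- p on σ from a to b'
    obtain ⟨ρ, hρ⟩ := hgeo a a'
    obtain ⟨q, hq, hdq⟩ := hslim a a' b' ρ γ' σ hρ hγ' hσ u hu
    rcases hq with ⟨v, hv, rfl⟩ | ⟨v, hv, rfl⟩
    · -- q on ρ from a to a'
      refine ⟨0, h0mem, ?_⟩
      have h1 : dist (ρ v) a' = dist a a' - v := geo_dist_end hρ hv
      calc dist (γ t) (γ' 0)
          ≤ dist (γ t) (σ u) + dist (σ u) (ρ v) + dist (ρ v) (γ' 0) := dist_triangle4 _ _ _ _
        _ ≤ δ + δ + dist (ρ v) a' := by rw [hγ'.1]; linarith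
        _ ≤ K + 2 * δ := by rw [h1]; linarith [hv.1]
    · -- q on γ'
      exact ⟨v, hv, by
        calc dist (γ t) (γ' v) ≤ dist (γ t) (σ u) + dist (σ u) (γ' v) := dist_triangle _ _ _
          _ ≤ K + 2 * δ := by linarith⟩
  · -- p on τ from b' to b
    refine ⟨dist a' b', hLmem, ?_⟩
    have h1 : dist (τ u) b' = u := geo_dist_start hτ hu
    calc dist (γ t) (γ' (dist a' b'))
        ≤ dist (γ t) (τ u) + dist (τ u) (γ' (dist a' b')) := dist_triangle _ _ _
      _ = dist (γ t) (τ u) + dist (τ u) b' := by rw [hγ'.2.1]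
      _ ≤ δ + u := by rw [h1]; linarith
      _ ≤ K + 2 * δ := by
          have : u ≤ dist b' b := hu.2
          rw [dist_comm b' b] at this
          linarith



lemma pow_mod' {G : Type*} [Group G] (h : G) (n : ℕ) (hord : h ^ n = 1) (m : ℕ) :
    h ^ m = h ^ (m % n) := by
  conv_lhs => rw [← Nat.div_add_mod m n]
  rw [pow_add, pow_mul, hord, one_pow, one_mul]

lemma zpow_red {G : Type*} [Group G] (h : G) (n : ℕ) (hn : 0 < n) (hord : h ^ n = 1) (k : ℤ) :
    h ^ k = h ^ ((k % n).toNat) := by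
  have hnz : (n : ℤ) ≠ 0 := by exact_mod_cast hn.ne'
  have h1 : (((k % n).toNat : ℕ) : ℤ) = k % (n : ℤ) := Int.toNat_of_nonneg (Int.emod_nonneg k hnz)
  rw [← zpow_natCast, h1]
  have h2 : k = (n : ℤ) * (k / n) + k % n := (Int.mul_ediv_add_emod k n).symm
  calc h ^ k = h ^ ((n : ℤ) * (k / n) + k % n) := by rw [← h2]
    _ = (h ^ (n : ℤ)) ^ (k / (n:ℤ)) * h ^ (k % (n:ℤ)) := by rw [zpow_add, zpow_mul]
    _ = h ^ (k % (n:ℤ)) := by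
        rw [zpow_natCast, hord, one_zpow, one_mul]


end Stmt10Aux

/-- Let `X` be a geodesic `δ`-hyperbolic metric space with `δ > 0`, let `h` be an isometry
of `X` of finite order `n ≥ 1`, and let `K ≥ 6δ`.  Then the coarse fixed set
`fix_K(h) = { y : d(y, h^k y) ≤ K for all k ∈ ℤ }` is quasiconvex: any point on any
geodesic segment between two points of `fix_K(h)` lies within distance `n(K + 2δ) + δ` of
`fix_K(h)`. -/


theorem statement10 {X : Type*} [MetricSpace X]
    (δ : ℝ) (hδ : 0 < δ) (hgeo : GeodesicMetricSpace X) (hslim : SlimTriangles X δ)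
    (h : X ≃ᵢ X) (n : ℕ) (hn : 1 ≤ n) (hord : h ^ n = 1)
    (K : ℝ) (hK : 6 * δ ≤ K)
    (a b : X)
    (ha : a ∈ {y : X | ∀ k : ℤ, dist y ((h ^ k) y) ≤ K})
    (hb : b ∈ {y : X | ∀ k : ℤ, dist y ((h ^ k) y) ≤ K})
    (γ : ℝ → X) (hγ : IsGeodesicSegment γ a b)
    (t : ℝ) (ht : t ∈ Set.Icc (0 : ℝ) (dist a b)) :
    Metric.infDist (γ t) {y : X | ∀ k : ℤ, dist y ((h ^ k) y) ≤ K} ≤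
      (n : ℝ) * (K + 2 * δ) + δ := by
  have hδ0 : 0 ≤ δ := hδ.le
  have hK0 : 0 ≤ K := by linarith
  set x := γ t with hx
  -- the geodesic h ∘ γ
  have hdab : dist (h a) (h b) = dist a b := h.dist_eq a b
  have hγh : IsGeodesicSegment (fun s => h (γ s)) (h a) (h b) := by
    refine ⟨by show h (γ 0) = h a; rw [hγ.1],
      by show h (γ (dist (h a) (h b))) = h b; rw [hdab, hγ.2.1], ?_⟩
    intro s hs u hu
    rw [hdab] at hs hu
    rw [h.dist_eq, hγ.2.2 s hs u hu]
  have haK : dist a (h a) ≤ K := by have := ha 1; rwa [zpow_one] at this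
  have hbK : dist b (h b) ≤ K := by have := hb 1; rwa [zpow_one] at this
  -- bound the displacement of x
  obtain ⟨s, hs, hsd⟩ := Stmt10Aux.fellow δ hδ hgeo hslim K hK0 haK hbK hγ hγh ht
  have hs' : s ∈ Set.Icc (0:ℝ) (dist a b) := by rwa [hdab] at hs
  have hts : |t - s| ≤ (K + 2*δ) + K := by
    have h1 : dist (γ t) a = t := Stmt10Aux.geo_dist_start hγ ht
    have h2 : dist (h (γ s)) (h a) = s := by
      rw [h.dist_eq]; exact Stmt10Aux.geo_dist_start hγ hs'
    rw [abs_sub_le_iff]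
    constructor
    · have := dist_triangle4 (γ t) (h (γ s)) (h a) a
      rw [h2] at this
      rw [dist_comm (h a) a] at this
      linarith [h1 ▸ le_refl (dist (γ t) a)]
    · have := dist_triangle4 (h (γ s)) (γ t) a (h a)
      rw [dist_comm (h (γ s)) (γ t)] at this
      rw [h1] at this
      linarith [h2 ▸ le_refl (dist (h (γ s)) (h a))]
  have hS : dist x (h x) ≤ 3*K + 4*δ := by
    have h3 : dist (h (γ s)) (h (γ t)) = |s - t| := by
      rw [h.dist_eq, hγ.2.2 s hs' t ht]
    have h4 := dist_triangle (γ t) (h (γ s)) (h (γ t))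
    rw [h3, abs_sub_comm] at h4
    have := abs_nonneg (t - s)
    calc dist x (h x) ≤ dist (γ t) (h (γ s)) + |t - s| := h4
      _ ≤ 3*K + 4*δ := by linarith
  -- chain bounds
  have step : ∀ j : ℕ, dist ((h^j) x) ((h^(j+1)) x) = dist x (h x) := by
    intro j
    have e : (h^(j+1)) x = (h^j) (h x) := by rw [pow_succ]; rfl
    rw [e, (h^j).dist_eq]
  have chain : ∀ j : ℕ, dist x ((h^j) x) ≤ (j : ℝ) * dist x (h x) := by
    intro j; induction j with
    | zero => simp
    | succ j ih =>
      have := dist_triangle x ((h^j) x) ((h^(j+1)) x)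
      rw [step j] at this
      push_cast
      linarith
  have rev : ∀ j : ℕ, j ≤ n → dist x ((h^j) x) ≤ ((n - j : ℕ) : ℝ) * dist x (h x) := by
    intro j hj
    have e1 : h^(n-j) * h^j = 1 := by rw [← pow_add, Nat.sub_add_cancel hj, hord]
    have key : (h^(n-j)) ((h^j) x) = x := by
      have : (h^(n-j) * h^j) x = (1 : X ≃ᵢ X) x := by rw [e1]
      exact this
    calc dist x ((h^j) x) = dist ((h^(n-j)) x) ((h^(n-j)) ((h^j) x)) :=
          ((h^(n-j)).dist_eq _ _).symm
      _ = dist ((h^(n-j)) x) x := by rw [key]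
      _ = dist x ((h^(n-j)) x) := dist_comm _ _
      _ ≤ ((n-j : ℕ) : ℝ) * dist x (h x) := chain _
  -- orbit radius machinery
  have hn0 : 0 < n := hn
  have hne : (Finset.range n).Nonempty := ⟨0, Finset.mem_range.mpr hn0⟩
  set r : X → ℝ := fun y₀ => (Finset.range n).sup' hne (fun k => dist y₀ ((h^k) x)) with hr
  have hpowmod : ∀ m : ℕ, h ^ m = h ^ (m % n) := Stmt10Aux.pow_mod' h n hord
  have rot : ∀ (y₀ : X) (j i : ℕ), ∃ i' ∈ Finset.range n,
      dist ((h^j) y₀) ((h^i) x) = dist y₀ ((h^i') x) := by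
    intro y₀ j i
    set j' := n - j % n with hj'
    refine ⟨(j' + i) % n, Finset.mem_range.mpr (Nat.mod_lt _ hn0), ?_⟩
    have e1 : h ^ (j + j') = 1 := by
      have h1 : j % n < n := Nat.mod_lt _ hn0
      have h2 : n * (j / n) + j % n = j := Nat.div_add_mod j n
      have h3 : n * (j / n + 1) = n * (j / n) + n := by ring
      have hjeq : j + j' = n * (j / n + 1) := by omega
      rw [hjeq, pow_mul, hord, one_pow]
    have e3 : h^j * h^((j'+i) % n) = h^i := by
      rw [← hpowmod (j'+i), ← pow_add, show j + (j'+i) = (j+j') + i from by ring,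
        pow_add, e1, one_mul]
    have e4 : (h^j) ((h^((j'+i) % n)) x) = (h^i) x := by
      have : (h^j * h^((j'+i) % n)) x = (h^i) x := by rw [e3]
      exact this
    rw [← e4, (h^j).dist_eq]
  have hbdd : BddBelow (Set.range r) := by
    refine ⟨0, ?_⟩
    rintro _ ⟨y₀, rfl⟩
    exact le_trans dist_nonneg
      (Finset.le_sup' (fun k => dist y₀ ((h^k) x)) (Finset.mem_range.mpr hn0))
  haveI : Nonempty X := ⟨a⟩
  set rstar := ⨅ y₀ : X, r y₀ with hrstar
  obtain ⟨y, hy⟩ : ∃ y₀, r y₀ < rstar + δ :=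
    exists_lt_of_ciInf_lt (lt_add_of_pos_right _ hδ)
  -- bound on the orbit diameter R0
  have hR0each : ∀ k ∈ Finset.range n, dist x ((h^k) x) ≤ (n:ℝ)/2 * (3*K+4*δ) := by
    intro k hk
    have hk' : k < n := Finset.mem_range.mp hk
    have hSnn : 0 ≤ dist x (h x) := dist_nonneg
    have hKpos : (0:ℝ) ≤ 3*K+4*δ := by linarith
    rcases le_total ((k:ℝ)) ((n:ℝ)/2) with hle | hle
    · calc dist x ((h^k) x) ≤ (k:ℝ) * dist x (h x) := chain k
        _ ≤ (n:ℝ)/2 * (3*K+4*δ) := mul_le_mul hle hS hSnn (by positivity)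
    · have hcast : ((n-k : ℕ):ℝ) = (n:ℝ) - (k:ℝ) := by
        rw [Nat.cast_sub hk'.le]
      have hle2 : ((n-k:ℕ):ℝ) ≤ (n:ℝ)/2 := by rw [hcast]; linarith
      calc dist x ((h^k) x) ≤ ((n-k : ℕ):ℝ) * dist x (h x) := rev k hk'.le
        _ ≤ (n:ℝ)/2 * (3*K+4*δ) := mul_le_mul hle2 hS hSnn (by positivity)
  set R0 := (Finset.range n).sup' hne (fun k => dist x ((h^k) x)) with hR0def
  have hR0le : R0 ≤ (n:ℝ)/2 * (3*K+4*δ) := Finset.sup'_le _ _ hR0each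
  obtain ⟨k₁, hk₁, hk₁eq⟩ := Finset.exists_mem_eq_sup' hne (fun k => dist x ((h^k) x))
  obtain ⟨m, hm⟩ := Stmt10Aux.mid_lemma δ hgeo hslim x ((h^k₁) x)
  have hrm : r m ≤ R0/2 + 2*δ := by
    apply Finset.sup'_le
    intro i hi
    have h1 : dist ((h^i) x) x ≤ R0 := by
      rw [dist_comm]; exact Finset.le_sup' (fun k => dist x ((h^k) x)) hi
    have h2 : dist ((h^i) x) ((h^k₁) x) ≤ R0 := by
      obtain ⟨i', hi', he⟩ := rot x i k₁
      rw [he]; exact Finset.le_sup' (fun k => dist x ((h^k) x)) hi'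
    have h3 := hm ((h^i) x)
    have h4 : dist x ((h^k₁) x) = R0 := hk₁eq.symm
    have h5 := max_le h1 h2
    rw [dist_comm m ((h^i) x)]
    rw [h4] at h3
    linarith
  have hrstarR0 : rstar ≤ R0/2 + 2*δ := le_trans (ciInf_le hbdd m) hrm
  -- y is an honest coarse fixed point
  have hdisp : ∀ j : ℕ, dist y ((h^j) y) ≤ 6*δ := by
    intro j
    obtain ⟨m', hm'⟩ := Stmt10Aux.mid_lemma δ hgeo hslim y ((h^j) y)
    have h1 : r m' ≤ r y - dist y ((h^j) y)/2 + 2*δ := by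
      apply Finset.sup'_le
      intro i hi
      have h3 := hm' ((h^i) x)
      have h4 : dist ((h^i) x) y ≤ r y := by
        rw [dist_comm]; exact Finset.le_sup' (fun k => dist y ((h^k) x)) hi
      have h5 : dist ((h^i) x) ((h^j) y) ≤ r y := by
        rw [dist_comm]
        obtain ⟨i', hi', he⟩ := rot y j i
        rw [he]; exact Finset.le_sup' (fun k => dist y ((h^k) x)) hi'
      have h6 := max_le h4 h5
      rw [dist_comm m' ((h^i) x)]
      linarith
    have h2 : rstar ≤ r m' := ciInf_le hbdd m'
    linarith
  have hymem : y ∈ {y₀ : X | ∀ k : ℤ, dist y₀ ((h ^ k) y₀) ≤ K} := by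
    intro k
    rw [Stmt10Aux.zpow_red h n hn0 hord k]
    calc dist y ((h ^ (k % (n:ℤ)).toNat) y) ≤ 6*δ := hdisp _
      _ ≤ K := hK
  -- conclude
  have h6 : dist y x ≤ r y := by
    have h7 : dist y ((h^0) x) ≤ r y :=
      Finset.le_sup' (fun k => dist y ((h^k) x)) (Finset.mem_range.mpr hn0)
    simpa using h7
  have hfin : Metric.infDist (γ t) {y₀ : X | ∀ k : ℤ, dist y₀ ((h ^ k) y₀) ≤ K} ≤ dist (γ t) y :=
    Metric.infDist_le_dist_of_mem hymem
  have h8 : dist (γ t) y = dist y x := by rw [dist_comm, hx]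
  have hn1 : (1:ℝ) ≤ (n:ℝ) := by exact_mod_cast hn
  have hnn : (0:ℝ) ≤ (n:ℝ) := by linarith
  have : dist (γ t) y ≤ (n:ℝ)/2 * (3*K+4*δ)/2 + 3*δ := by
    rw [h8]
    linarith
  calc Metric.infDist (γ t) {y₀ : X | ∀ k : ℤ, dist y₀ ((h ^ k) y₀) ≤ K}
      ≤ dist (γ t) y := hfin
    _ ≤ (n:ℝ)/2 * (3*K+4*δ)/2 + 3*δ := this
    _ ≤ (n:ℝ) * (K + 2*δ) + δ := by nlinarith [mul_le_mul_of_nonneg_left hK hnn, hn1, hδ]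
end

section
/- Let G be a countable discrete group acting measurably on a measurable space X, let μ be a probability measure on G, let ν be a μ-stationary probability measure on X, and let S be the subsemigroup of G generated by the inverses of the elements of the support of μ (i.e. by { g⁻¹ : μ({g}) > 0 }). Let A ⊆ X be a measurable set such that: (i) for every h in S ∪ {1}, the family of sets { (gh)A : g ∈ S } contains infinitely many distinct sets; and (ii) whenever g₁, g₂ ∈ S ∪ {1} and g₁A ≠ g₂A, one has ν(g₁A ∩ g₂A) = 0. Then ν(hA) = 0 for every h ∈ S ∪ {1}; in particular ν(A) = 0. -/
open ENNReal MeasureTheory Pointwise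

/-- Let a countable discrete group `G` act measurably on a measurable space `X`, let `μ`
be a probability distribution on `G`, let `ν` be a `μ`-stationary probability measure on
`X`, and let `S` be the subsemigroup of `G` generated by the inverses of the elements of
the support of `μ`.  Let `A ⊆ X` be a measurable set such that
(i) for every `h ∈ S ∪ {1}`, the family `{ (g h) A : g ∈ S }` contains infinitely many
distinct sets, and
(ii) whenever `g₁, g₂ ∈ S ∪ {1}` and `g₁ A ≠ g₂ A`, one has `ν(g₁ A ∩ g₂ A) = 0`.
Then `ν(h A) = 0` for every `h ∈ S ∪ {1}`; in particular `ν(A) = 0`. -/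
theorem statement12 {G X : Type*} [Group G] [Countable G]
    [MeasurableSpace X] [MulAction G X]
    (hmeas : ∀ g : G, Measurable fun x : X => g • x)
    (μ : PMF G) (ν : Measure X) [IsProbabilityMeasure ν]
    (hstat : ∀ B : Set X, MeasurableSet B →
      ν B = ∑' g : G, μ g * ν ((fun x : X => g • x) ⁻¹' B))
    (S : Subsemigroup G)
    (hS : S = Subsemigroup.closure ((fun g : G => g⁻¹) '' μ.support))
    (A : Set X) (hA : MeasurableSet A)
    (hinf : ∀ h : G, (h ∈ S ∨ h = 1) →
      {B : Set X | ∃ g ∈ S, B = (g * h) • A}.Infinite)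
    (hmeager : ∀ g₁ g₂ : G, (g₁ ∈ S ∨ g₁ = 1) → (g₂ ∈ S ∨ g₂ = 1) →
      g₁ • A ≠ g₂ • A → ν ((g₁ • A) ∩ (g₂ • A)) = 0) :
    (∀ h : G, (h ∈ S ∨ h = 1) → ν (h • A) = 0) ∧ ν A = 0 := by
  -- measurability of translates
  have hmeasA : ∀ h : G, MeasurableSet (h • A) := by
    intro h
    have : h • A = (fun x : X => h⁻¹ • x) ⁻¹' A := by
      rw [Set.preimage_smul, inv_inv]
    rw [this]
    exact hmeas h⁻¹ hA
  -- stationarity in translate form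
  have hstat' : ∀ h : G, ν (h • A) = ∑' g : G, μ g * ν ((g⁻¹ * h) • A) := by
    intro h
    rw [hstat (h • A) (hmeasA h)]
    congr 1; funext g
    rw [Set.preimage_smul, mul_smul]
  -- membership facts
  have hgen : ∀ g : G, g ∈ μ.support → g⁻¹ ∈ S := by
    intro g hg
    rw [hS]
    exact Subsemigroup.subset_closure ⟨g, hg, rfl⟩
  have hmulT : ∀ s : G, s ∈ S → ∀ h : G, (h ∈ S ∨ h = 1) → s * h ∈ S := by
    intro s hs h hh
    rcases hh with hh | rfl
    · exact mul_mem hs hh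
    · simpa using hs
  -- the supremum
  set T : Set G := {h : G | h ∈ S ∨ h = 1} with hT
  set M : ℝ≥0∞ := ⨆ h : T, ν ((h : G) • A) with hM
  have hle : ∀ h : G, (h ∈ S ∨ h = 1) → ν (h • A) ≤ M := by
    intro h hh
    exact le_iSup (fun h : T => ν ((h : G) • A)) ⟨h, hh⟩
  have hM1 : M ≤ 1 := iSup_le fun h => prob_le_one
  have hMtop : M ≠ ∞ := (hM1.trans_lt one_lt_top).ne
  -- finiteness of the family of translates of measure ≥ ε
  have hfin : ∀ ε : ℝ≥0∞, 0 < ε →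
      {B : Set X | (∃ h : G, (h ∈ S ∨ h = 1) ∧ B = h • A) ∧ ε ≤ ν B}.Finite := by
    intro ε hε
    set ι := {B : Set X // ∃ h : G, (h ∈ S ∨ h = 1) ∧ B = h • A}
    have key : Set.Finite {i : ι | ε ≤ ν (i : Set X)} := by
      apply MeasureTheory.Measure.finite_const_le_meas_of_disjoint_iUnion₀ ν hε
        (As := fun i : ι => (i : Set X))
      · rintro ⟨B, h, hh, rfl⟩
        exact (hmeasA h).nullMeasurableSet
      · rintro ⟨B₁, h₁, hh₁, rfl⟩ ⟨B₂, h₂, hh₂, rfl⟩ hne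
        have hBne : h₁ • A ≠ h₂ • A := by
          intro hc
          exact hne (Subtype.ext hc)
        exact hmeager h₁ h₂ hh₁ hh₂ hBne
      · exact (measure_lt_top ν _).ne
    have himg : {B : Set X | (∃ h : G, (h ∈ S ∨ h = 1) ∧ B = h • A) ∧ ε ≤ ν B} =
        (fun i : ι => (i : Set X)) '' {i : ι | ε ≤ ν (i : Set X)} := by
      ext B
      constructor
      · rintro ⟨hB, hεB⟩
        exact ⟨⟨B, hB⟩, hεB, rfl⟩
      · rintro ⟨⟨B', hB'⟩, hεB, rfl⟩
        exact ⟨hB', hεB⟩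
    rw [himg]
    exact key.image _
  by_cases hM0 : M = 0
  · have hzero : ∀ h : G, (h ∈ S ∨ h = 1) → ν (h • A) = 0 := by
      intro h hh
      exact le_antisymm (hM0 ▸ hle h hh) (zero_le)
    refine ⟨hzero, ?_⟩
    have := hzero 1 (Or.inr rfl)
    rwa [one_smul] at this
  · exfalso
    have hMpos : 0 < M := pos_iff_ne_zero.mpr hM0
    have hhalf : M / 2 < M := ENNReal.half_lt_self hM0 hMtop
    obtain ⟨⟨h₀, hh₀⟩, hh₀M⟩ := lt_iSup_iff.mp hhalf
    -- finite nonempty family with measure > M/2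
    set F : Set (Set X) :=
      {B : Set X | (∃ h : G, (h ∈ S ∨ h = 1) ∧ B = h • A) ∧ M / 2 ≤ ν B} with hF
    have hFfin : F.Finite := hfin (M / 2) (ENNReal.half_pos hM0)
    have hFne : F.Nonempty := ⟨h₀ • A, ⟨h₀, hh₀, rfl⟩, hh₀M.le⟩
    obtain ⟨B₀, hB₀F, hB₀max⟩ := Set.Finite.exists_maximalFor (fun B => ν B) F hFfin hFne
    have hB₀max' : ∀ B ∈ F, ν B ≤ ν B₀ := by
      intro B hB
      rcases le_total (ν B) (ν B₀) with h | h
      · exact h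
      · exact hB₀max hB h
    obtain ⟨⟨h₀', hh₀', rfl⟩, hB₀half⟩ := hB₀F
    -- ν (h₀' • A) = M : the supremum is attained
    have hB₀M : ν (h₀' • A) = M := by
      refine le_antisymm (hle h₀' hh₀') (iSup_le ?_)
      rintro ⟨h, hh⟩
      by_cases hc : M / 2 ≤ ν (h • A)
      · exact hB₀max' (h • A) ⟨⟨h, hh, rfl⟩, hc⟩
      · exact (le_of_not_ge hc).trans hB₀half
    -- rigidity of the maximum under the random walk
    have hrig : ∀ h : G, (h ∈ S ∨ h = 1) → ν (h • A) = M →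
        ∀ g : G, g ∈ μ.support → ν ((g⁻¹ * h) • A) = M := by
      intro h hh hhM g hg
      have hmem : g⁻¹ * h ∈ S := hmulT g⁻¹ (hgen g hg) h hh
      refine le_antisymm (hle _ (Or.inl hmem)) ?_
      by_contra hltc
      have hlt' : ν ((g⁻¹ * h) • A) < M := lt_of_not_ge hltc
      have hterm : ∀ a : G, μ a * ν ((a⁻¹ * h) • A) ≤ μ a * M := by
        intro a
        by_cases ha : a ∈ μ.support
        · exact mul_le_mul_right (hle _ (Or.inl (hmulT a⁻¹ (hgen a ha) h hh))) _
        · rw [PMF.mem_support_iff, not_not] at ha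
          simp [ha]
      have hμg : μ g ≠ 0 := PMF.mem_support_iff μ g |>.mp hg
      have hμgtop : μ g ≠ ∞ := PMF.apply_ne_top μ g
      have hstrict : μ g * ν ((g⁻¹ * h) • A) < μ g * M :=
        (ENNReal.mul_lt_mul_iff_right hμg hμgtop).mpr hlt'
      have hlhs : (∑' a : G, μ a * ν ((a⁻¹ * h) • A)) = M := by
        rw [← hstat' h, hhM]
      have hrhs : (∑' a : G, μ a * M) = M := by
        rw [ENNReal.tsum_mul_right, PMF.tsum_coe, one_mul]
      have : (∑' a : G, μ a * ν ((a⁻¹ * h) • A)) < ∑' a : G, μ a * M :=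
        ENNReal.tsum_lt_tsum (by rw [hlhs]; exact hMtop) hterm hstrict
      rw [hlhs, hrhs] at this
      exact lt_irrefl M this
    -- propagate over the whole semigroup
    have hind : ∀ s : G, s ∈ Subsemigroup.closure ((fun g : G => g⁻¹) '' μ.support) →
        ∀ h : G, (h ∈ S ∨ h = 1) → ν (h • A) = M → ν ((s * h) • A) = M := by
      intro s hs
      induction hs using Subsemigroup.closure_induction with
      | mem x hx =>
        obtain ⟨g, hg, rfl⟩ := hx
        intro h hh hhM
        exact hrig h hh hhM g hg
      | mul x y hx hy ihx ihy =>
        intro h hh hhM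
        have hyS : y ∈ S := hS ▸ hy
        have h1 : ν ((y * h) • A) = M := ihy h hh hhM
        have h2 : ν ((x * (y * h)) • A) = M :=
          ihx (y * h) (Or.inl (hmulT y hyS h hh)) h1
        rwa [mul_assoc]
    -- contradiction with infinitude
    have hIinf := hinf h₀' hh₀'
    have hsub : {B : Set X | ∃ g ∈ S, B = (g * h₀') • A} ⊆
        {B : Set X | (∃ h : G, (h ∈ S ∨ h = 1) ∧ B = h • A) ∧ M ≤ ν B} := by
      rintro B ⟨g, hg, rfl⟩
      refine ⟨⟨g * h₀', Or.inl (hmulT g hg h₀' hh₀'), rfl⟩, ?_⟩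
      rw [hind g (hS ▸ hg) h₀' hh₀' hB₀M]
    exact hIinf ((hfin M hMpos).subset hsub)
end
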